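/- arXiv:0805.1016 — 6 statements merged into one kernel-verified Lean document; each statement's English description precedes it below -/
import Mathlib

section
/- Let Y be a Hilbert space and let R be the right shift on H = ℓ²(ℕ, Y), defined by R(x_1, x_2, ...) = (0, x_1, x_2, ...) (unilateral shift). Then there exists a sequence {T_n} of unitary operators on H, with T_n periodic of period n (i.e., T_n^n = I), such that T_n → R in the strong operator topology. -/
open Filter Topology
open scoped ENNReal

section Aux

variable {Y : Type*} [NormedAddCommGroup Y] [InnerProductSpace ℂ Y] [CompleteSpace Y]

lemma memℓp_comp_equiv (e : ℕ ≃ ℕ) (f : lp (fun _ : ℕ => Y) 2) :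
    Memℓp (fun k => f (e k)) 2 := by
  have h := lp.memℓp f
  rw [memℓp_gen_iff (by norm_num)] at h ⊢
  exact (Equiv.summable_iff e (f := fun i => ‖f i‖ ^ (2 : ℝ≥0∞).toReal)).2 h

/-- Composition with a permutation of indices, as a linear isometry equivalence of `ℓ²`. -/
noncomputable def compEquiv (e : Equiv.Perm ℕ) :
    lp (fun _ : ℕ => Y) 2 ≃ₗᵢ[ℂ] lp (fun _ : ℕ => Y) 2 where
  toFun f := ⟨fun k => f (e k), memℓp_comp_equiv e f⟩
  invFun f := ⟨fun k => f (e.symm k), memℓp_comp_equiv e.symm f⟩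
  map_add' f g := by
    apply lp.ext; funext k
    simp [lp.coeFn_add]
    rfl
  map_smul' c f := by
    apply lp.ext; funext k
    simp [lp.coeFn_smul]
  left_inv f := by
    apply lp.ext; funext k
    simp
  right_inv f := by
    apply lp.ext; funext k
    simp
  norm_map' f := by
    have hp : 0 < (2 : ℝ≥0∞).toReal := by norm_num
    rw [lp.norm_eq_tsum_rpow hp, lp.norm_eq_tsum_rpow hp]
    congr 1
    exact Equiv.tsum_eq e (fun i => ‖f i‖ ^ (2 : ℝ≥0∞).toReal)

@[simp] lemma compEquiv_apply (e : Equiv.Perm ℕ) (f : lp (fun _ : ℕ => Y) 2) (k : ℕ) :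
    (compEquiv e f) k = f (e k) := rfl

lemma compEquiv_mul (e f : Equiv.Perm ℕ) :
    (compEquiv (Y := Y) e) * compEquiv f = compEquiv (f * e) := by
  ext x k
  rfl

lemma compEquiv_one : (compEquiv (Y := Y) 1) = 1 := by
  ext x k
  rfl

lemma compEquiv_pow (e : Equiv.Perm ℕ) (m : ℕ) :
    (compEquiv (Y := Y) e) ^ m = compEquiv (e ^ m) := by
  induction m with
  | zero => simpa using compEquiv_one.symm
  | succ m ih =>
      rw [pow_succ, ih, compEquiv_mul, ← pow_succ']

end Aux

/-- The cyclic permutation on the first `n` naturals: `k ↦ k - 1 (mod n)` for `k < n`. -/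
def cyc (n : ℕ) : Equiv.Perm ℕ where
  toFun k := if k < n then (k + (n - 1)) % n else k
  invFun k := if k < n then (k + 1) % n else k
  left_inv k := by
    dsimp only
    by_cases hk : k < n
    · have hn : 0 < n := lt_of_le_of_lt (Nat.zero_le k) hk
      rw [if_pos hk, if_pos (Nat.mod_lt _ hn), Nat.mod_add_mod, Nat.add_assoc,
        Nat.sub_add_cancel hn, Nat.add_mod_right, Nat.mod_eq_of_lt hk]
    · rw [if_neg hk, if_neg hk]
  right_inv k := by
    dsimp only
    by_cases hk : k < n
    · have hn : 0 < n := lt_of_le_of_lt (Nat.zero_le k) hk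
      rw [if_pos hk, if_pos (Nat.mod_lt _ hn), Nat.mod_add_mod, Nat.add_assoc,
        Nat.add_comm 1 (n - 1), Nat.sub_add_cancel hn, Nat.add_mod_right, Nat.mod_eq_of_lt hk]
    · rw [if_neg hk, if_neg hk]

lemma cyc_apply (n k : ℕ) : cyc n k = if k < n then (k + (n - 1)) % n else k := rfl

lemma cyc_pow_apply (n m k : ℕ) :
    (cyc n ^ m) k = if k < n then (k + m * (n - 1)) % n else k := by
  induction m with
  | zero =>
      by_cases hk : k < n
      · simp [hk, Nat.mod_eq_of_lt hk]
      · simp [hk]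
  | succ m ih =>
      rw [pow_succ', Equiv.Perm.mul_apply, ih]
      by_cases hk : k < n
      · have hn : 0 < n := lt_of_le_of_lt (Nat.zero_le k) hk
        rw [if_pos hk, cyc_apply, if_pos (Nat.mod_lt _ hn), Nat.mod_add_mod, if_pos hk]
        congr 1
        ring
      · rw [if_neg hk, cyc_apply, if_neg hk, if_neg hk]

lemma cyc_pow_self (n : ℕ) : cyc n ^ n = 1 := by
  ext k
  rw [cyc_pow_apply]
  by_cases hk : k < n
  · rw [if_pos hk, Nat.add_mul_mod_self_left, Nat.mod_eq_of_lt hk]; rfl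
  · rw [if_neg hk]; rfl

lemma single_apply_const {Y : Type*} [NormedAddCommGroup Y] (p : ℝ≥0∞) (i : ℕ) (a : Y) (j : ℕ) :
    (lp.single (E := fun _ : ℕ => Y) p i a) j = if j = i then a else 0 := by
  rw [lp.single_apply]
  split_ifs with h
  · subst h; simp
  · simp [h]

set_option maxHeartbeats 1000000 in
set_option synthInstance.maxHeartbeats 200000 in
/-- The right shift on `ℓ²(ℕ, Y)` is the strong limit of a sequence of unitary operators
`Tₙ` with `Tₙⁿ = 1` (periodic of period `n`). -/
theorem stmt1 {Y : Type*} [NormedAddCommGroup Y] [InnerProductSpace ℂ Y] [CompleteSpace Y]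
    (R : lp (fun _ : ℕ => Y) 2 →L[ℂ] lp (fun _ : ℕ => Y) 2)
    (hR0 : ∀ x, R x 0 = 0) (hR : ∀ x k, R x (k + 1) = x k) :
    ∃ T : ℕ → (lp (fun _ : ℕ => Y) 2 →L[ℂ] lp (fun _ : ℕ => Y) 2),
      (∀ n, 1 ≤ n → T n ∈ unitary (lp (fun _ : ℕ => Y) 2 →L[ℂ] lp (fun _ : ℕ => Y) 2) ∧
        (T n) ^ n = 1) ∧
      ∀ x, Tendsto (fun n => T n x) atTop (𝓝 (R x)) := by
  classical
  set H := lp (fun _ : ℕ => Y) 2 with hHdef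
  let L : ℕ → (H ≃ₗᵢ[ℂ] H) := fun n => compEquiv (cyc n)
  let U : ℕ → unitary (H →L[ℂ] H) := fun n => Unitary.linearIsometryEquiv.symm (L n)
  have hval : ∀ n (z : H) (k : ℕ), ((U n : H →L[ℂ] H) z) k = z (cyc n k) := fun n z k => rfl
  refine ⟨fun n => (U n : H →L[ℂ] H), fun n hn => ⟨(U n).property, ?_⟩, fun x => ?_⟩
  · have hLn : (L n) ^ n = 1 := by
      show (compEquiv (cyc n)) ^ n = 1
      rw [compEquiv_pow, cyc_pow_self, compEquiv_one]
    have hUn : (U n) ^ n = 1 := by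
      show (Unitary.linearIsometryEquiv.symm (L n)) ^ n = 1
      rw [← map_pow, hLn, map_one]
    have hcoe : (U n : H →L[ℂ] H) ^ n = ((U n ^ n : unitary (H →L[ℂ] H)) : H →L[ℂ] H) :=
      (SubmonoidClass.coe_pow (U n) n).symm
    rw [hcoe, hUn]
    rfl
  · -- convergence
    set Q : ℕ → H := fun m => ∑ i ∈ Finset.range m, lp.single 2 i (x i) with hQdef
    have hQcoe : ∀ m j, m ≤ j → (Q m : ∀ _ : ℕ, Y) j = 0 := by
      intro m j hj
      simp only [hQdef]
      rw [lp.coeFn_sum, Finset.sum_apply]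
      simp only [single_apply_const, Finset.sum_ite_eq, Finset.mem_range]
      rw [if_neg (by omega)]
    have hQlt : ∀ m j, j < m → (Q m : ∀ _ : ℕ, Y) j = x j := by
      intro m j hj
      simp only [hQdef]
      rw [lp.coeFn_sum, Finset.sum_apply]
      simp only [single_apply_const, Finset.sum_ite_eq, Finset.mem_range]
      rw [if_pos hj]
    have hsum : HasSum (fun i : ℕ => lp.single 2 i (x i : Y)) x :=
      lp.hasSum_single (by norm_num) x
    have hQtend : Tendsto Q atTop (𝓝 x) := hsum.tendsto_sum_nat
    have hdiff : Tendsto (fun m => ‖x - Q m‖) atTop (𝓝 (0 : ℝ)) := by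
      have h1 : Tendsto (fun m => x - Q m) atTop (𝓝 (x - x)) :=
        tendsto_const_nhds.sub hQtend
      simpa using h1.norm
    have key : ∀ n, 1 ≤ n → (U n : H →L[ℂ] H) (Q (n - 1)) = R (Q (n - 1)) := by
      intro n hn
      apply lp.ext; funext k
      rcases k with _ | k
      · rw [hval, hR0]
        have hc : cyc n 0 = n - 1 := by
          rw [cyc_apply, if_pos (show 0 < n by omega)]
          rw [Nat.zero_add]
          exact Nat.mod_eq_of_lt (by omega)
        rw [hc]
        exact hQcoe (n - 1) (n - 1) le_rfl
      · rw [hval, hR]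
        by_cases hk : k + 1 < n
        · have hc : cyc n (k + 1) = k := by
            rw [cyc_apply, if_pos hk]
            have h1 : k + 1 + (n - 1) = k + n := by omega
            rw [h1, Nat.add_mod_right, Nat.mod_eq_of_lt (by omega)]
          rw [hc]
        · have hc : cyc n (k + 1) = k + 1 := by rw [cyc_apply, if_neg hk]
          rw [hc, hQcoe _ _ (by omega), hQcoe _ _ (by omega)]
    rw [tendsto_iff_norm_sub_tendsto_zero]
    have hbound : ∀ n, 1 ≤ n →
        ‖(U n : H →L[ℂ] H) x - R x‖ ≤ (1 + ‖R‖) * ‖x - Q (n - 1)‖ := by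
      intro n hn
      have hsplit : (U n : H →L[ℂ] H) x - R x =
          (U n : H →L[ℂ] H) (x - Q (n - 1)) - R (x - Q (n - 1)) := by
        rw [map_sub, map_sub, key n hn]
        abel
      rw [hsplit]
      calc ‖(U n : H →L[ℂ] H) (x - Q (n - 1)) - R (x - Q (n - 1))‖
          ≤ ‖(U n : H →L[ℂ] H) (x - Q (n - 1))‖ + ‖R (x - Q (n - 1))‖ := norm_sub_le _ _
        _ ≤ ‖x - Q (n - 1)‖ + ‖R‖ * ‖x - Q (n - 1)‖ := by
            have h1 : ‖(U n : H →L[ℂ] H) (x - Q (n - 1))‖ = ‖x - Q (n - 1)‖ :=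
              ContinuousLinearMap.norm_map_of_mem_unitary (U n).property _
            have h2 : ‖R (x - Q (n - 1))‖ ≤ ‖R‖ * ‖x - Q (n - 1)‖ :=
              R.le_opNorm _
            linarith
        _ = (1 + ‖R‖) * ‖x - Q (n - 1)‖ := by ring
    have hg : Tendsto (fun n : ℕ => (1 + ‖R‖) * ‖x - Q (n - 1)‖) atTop (𝓝 (0 : ℝ)) := by
      have h1 : Tendsto (fun n : ℕ => ‖x - Q (n - 1)‖) atTop (𝓝 (0 : ℝ)) :=
        hdiff.comp (tendsto_sub_atTop_nat 1)
      simpa using h1.const_mul (1 + ‖R‖)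
    refine squeeze_zero' (Eventually.of_forall fun n => norm_nonneg _) ?_ hg
    filter_upwards [eventually_ge_atTop 1] with n hn
    exact hbound n hn
end

section
/- For the right shift R on ℓ²(ℕ, Y) and the cyclic shift T_n (cyclically permuting the first n coordinates), for every x = (x_1, x_2, ...) ∈ ℓ²(ℕ, Y) one has ‖T_n x − R x‖² = ‖x_n‖² + Σ_{k≥n} ‖x_{k+1} − x_k‖², and this quantity tends to 0 as n → ∞. -/
open Filter Topology ENNReal

/-- For the right shift `R` and the cyclic shifts `Tₙ` on `ℓ²(ℕ, Y)` (coordinates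
indexed from `0`), one has `‖Tₙ x - R x‖² = ‖x (n-1)‖² + ∑_{k} ‖x (n+k) - x (n-1+k)‖²`,
and this tends to `0` as `n → ∞`. -/
theorem stmt3 {Y : Type*} [NormedAddCommGroup Y] [InnerProductSpace ℂ Y] [CompleteSpace Y]
    (R : lp (fun _ : ℕ => Y) 2 →L[ℂ] lp (fun _ : ℕ => Y) 2)
    (hR0 : ∀ x, R x 0 = 0) (hR : ∀ x k, R x (k + 1) = x k)
    (T : ℕ → (lp (fun _ : ℕ => Y) 2 →L[ℂ] lp (fun _ : ℕ => Y) 2))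
    (hT0 : ∀ n x, 1 ≤ n → T n x 0 = x (n - 1))
    (hT1 : ∀ n x i, 1 ≤ i → i < n → T n x i = x (i - 1))
    (hT2 : ∀ n x i, 1 ≤ n → n ≤ i → T n x i = x i)
    (x : lp (fun _ : ℕ => Y) 2) :
    (∀ n, 1 ≤ n → ‖T n x - R x‖ ^ 2 =
      ‖x (n - 1)‖ ^ 2 + ∑' k : ℕ, ‖x (n + k) - x (n - 1 + k)‖ ^ 2) ∧
    Tendsto (fun n => ‖T n x - R x‖) atTop (𝓝 0) := by
  have hp : 0 < (2 : ℝ≥0∞).toReal := by norm_num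
  have hrpow : ∀ r : ℝ, r ^ (2 : ℝ≥0∞).toReal = r ^ 2 := by
    intro r
    rw [ENNReal.toReal_ofNat, show ((2 : ℝ)) = ((2 : ℕ) : ℝ) by norm_num,
      Real.rpow_natCast]
  have hns : ∀ f : lp (fun _ : ℕ => Y) 2, ‖f‖ ^ 2 = ∑' i, ‖f i‖ ^ 2 := by
    intro f
    have h := lp.norm_rpow_eq_tsum hp f
    rw [hrpow] at h
    rw [h]
    exact tsum_congr fun i => hrpow _
  have hsumsq : ∀ f : lp (fun _ : ℕ => Y) 2, Summable fun i => ‖f i‖ ^ 2 := by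
    intro f
    exact ((lp.memℓp f).summable hp).congr fun i => hrpow _
  -- coordinates of T n x - R x
  have hRx : ∀ i, 1 ≤ i → R x i = x (i - 1) := by
    intro i hi
    have h := hR x (i - 1)
    rwa [Nat.sub_add_cancel hi] at h
  have hc0 : ∀ n, 1 ≤ n → (T n x - R x) 0 = x (n - 1) := by
    intro n hn
    have : (T n x - R x) 0 = T n x 0 - R x 0 := by simp
    rw [this, hT0 n x hn, hR0, sub_zero]
  have hc1 : ∀ n i, 1 ≤ i → i < n → (T n x - R x) i = 0 := by
    intro n i hi hlt
    have : (T n x - R x) i = T n x i - R x i := by simp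
    rw [this, hT1 n x i hi hlt, hRx i hi, sub_self]
  have hc2 : ∀ n i, 1 ≤ n → n ≤ i → (T n x - R x) i = x i - x (i - 1) := by
    intro n i hn hni
    have : (T n x - R x) i = T n x i - R x i := by simp
    rw [this, hT2 n x i hn hni, hRx i (le_trans hn hni)]
  -- the key identity
  have key : ∀ n, 1 ≤ n → ‖T n x - R x‖ ^ 2 =
      ‖x (n - 1)‖ ^ 2 + ∑' k : ℕ, ‖x (n + k) - x (n - 1 + k)‖ ^ 2 := by
    intro n hn
    set f : ℕ → ℝ := fun i => ‖(T n x - R x) i‖ ^ 2 with hf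
    have hsum : Summable f := hsumsq _
    have hsplit : (∑ i ∈ Finset.range n, f i) + ∑' i, f (i + n) = ∑' i, f i :=
      Summable.sum_add_tsum_nat_add n hsum
    have hrange : ∑ i ∈ Finset.range n, f i = ‖x (n - 1)‖ ^ 2 := by
      rw [Finset.sum_eq_single_of_mem 0 (Finset.mem_range.mpr hn)]
      · rw [hf]; simp only; rw [hc0 n hn]
      · intro b hb hb0
        rw [hf]; simp only
        rw [hc1 n b (Nat.one_le_iff_ne_zero.mpr hb0) (Finset.mem_range.mp hb)]
        simp
    have htail : ∑' i, f (i + n) = ∑' k : ℕ, ‖x (n + k) - x (n - 1 + k)‖ ^ 2 := by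
      refine tsum_congr fun k => ?_
      rw [hf]; simp only
      rw [hc2 n (k + n) hn (Nat.le_add_left n k)]
      have e1 : k + n = n + k := by omega
      have e2 : k + n - 1 = n - 1 + k := by omega
      rw [e2, e1]
    rw [hns, ← hsplit, hrange, htail]
  refine ⟨key, ?_⟩
  -- limit part
  set g : ℕ → ℝ := fun i => ‖x i‖ ^ 2 with hg
  have hgsum : Summable g := hsumsq x
  set h : ℕ → ℝ := fun i => ‖x (i + 1) - x i‖ ^ 2 with hh
  have hhsum : Summable h := by
    refine Summable.of_nonneg_of_le (fun i => by positivity)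
      (fun i => ?_) (((hgsum.comp_injective (add_left_injective 1)).add hgsum).mul_left 2)
    show ‖x (i + 1) - x i‖ ^ 2 ≤ 2 * (g (i + 1) + g i)
    have h1 : ‖x (i + 1) - x i‖ ≤ ‖x (i + 1)‖ + ‖x i‖ := norm_sub_le _ _
    have h2 : (0 : ℝ) ≤ ‖x (i + 1) - x i‖ := norm_nonneg _
    rw [hg]; simp only
    have h3 : ‖x (i + 1) - x i‖ ^ 2 ≤ (‖x (i + 1)‖ + ‖x i‖) ^ 2 :=
      pow_le_pow_left₀ h2 h1 2
    nlinarith [sq_nonneg (‖x (i + 1)‖ - ‖x i‖)]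
  have hga : Tendsto (fun n => g (n - 1)) atTop (𝓝 0) :=
    hgsum.tendsto_atTop_zero.comp (tendsto_sub_atTop_nat 1)
  have hta : Tendsto (fun n => ∑' k, h (k + (n - 1))) atTop (𝓝 0) :=
    (tendsto_sum_nat_add h).comp (tendsto_sub_atTop_nat 1)
  have hsq : Tendsto (fun n => ‖T n x - R x‖ ^ 2) atTop (𝓝 0) := by
    have hlim : Tendsto (fun n => g (n - 1) + ∑' k, h (k + (n - 1))) atTop (𝓝 0) := by
      simpa using hga.add hta
    refine Tendsto.congr' ?_ hlim
    filter_upwards [eventually_ge_atTop 1] with n hn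
    rw [key n hn]
    congr 1
    refine tsum_congr fun k => ?_
    rw [hh]; simp only
    have e1 : k + (n - 1) + 1 = n + k := by omega
    have e2 : k + (n - 1) = n - 1 + k := by omega
    rw [e1, e2]
  have : Tendsto (fun n => Real.sqrt (‖T n x - R x‖ ^ 2)) atTop (𝓝 (Real.sqrt 0)) :=
    hsq.sqrt
  rw [Real.sqrt_zero] at this
  exact this.congr fun n => Real.sqrt_sq (norm_nonneg _)
end

section
/- Let H be a separable infinite-dimensional Hilbert space. Then there exists a sequence {T_n} of unitary operators on H such that no T_n has any eigenvalue of modulus 1 (equivalently, each T_n is almost weakly stable) and ‖T_n − I‖ → 0 in operator norm. -/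
open Filter Topology

open MeasureTheory Complex

noncomputable section Stmt4Aux

namespace Stmt4Aux

variable {α : Type*} [MeasurableSpace α] {μ : MeasureTheory.Measure α}

lemma memMul {f : α → ℂ} (hf : AEStronglyMeasurable f μ) (hb : ∀ x, ‖f x‖ ≤ 1)
    (g : Lp ℂ 2 μ) : MemLp (fun x => f x * g x) 2 μ :=
  (Lp.memLp g).of_le (hf.mul (Lp.aestronglyMeasurable g))
    (Filter.Eventually.of_forall fun x => by
      rw [norm_mul]
      exact mul_le_of_le_one_left (norm_nonneg _) (hb x))

/-- Multiplication by a function of norm at most one, as a linear map on `L²`. -/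
def mulLM (f : α → ℂ) (hf : AEStronglyMeasurable f μ) (hb : ∀ x, ‖f x‖ ≤ 1) :
    Lp ℂ 2 μ →ₗ[ℂ] Lp ℂ 2 μ where
  toFun g := MemLp.toLp _ (memMul hf hb g)
  map_add' g₁ g₂ := by
    rw [← MemLp.toLp_add (memMul hf hb g₁) (memMul hf hb g₂)]
    apply MemLp.toLp_congr
    filter_upwards [Lp.coeFn_add g₁ g₂] with x hx
    simp only [Pi.add_apply, hx]
    ring
  map_smul' c g := by
    simp only [RingHom.id_apply]
    rw [← MemLp.toLp_const_smul c (memMul hf hb g)]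
    apply MemLp.toLp_congr
    filter_upwards [Lp.coeFn_smul c g] with x hx
    simp only [Pi.smul_apply, hx, smul_eq_mul]
    ring

lemma coeFn_mulLM (f : α → ℂ) (hf : AEStronglyMeasurable f μ) (hb : ∀ x, ‖f x‖ ≤ 1)
    (g : Lp ℂ 2 μ) : ⇑(mulLM f hf hb g) =ᵐ[μ] fun x => f x * g x :=
  MemLp.coeFn_toLp (memMul hf hb g)

lemma norm_mulLM (f : α → ℂ) (hf : AEStronglyMeasurable f μ) (he : ∀ x, ‖f x‖ = 1)
    (g : Lp ℂ 2 μ) : ‖mulLM f hf (fun x => (he x).le) g‖ = ‖g‖ := by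
  rw [show mulLM f hf (fun x => (he x).le) g = MemLp.toLp _ (memMul hf (fun x => (he x).le) g) from rfl,
    Lp.norm_toLp, Lp.norm_def g]
  congr 1
  apply eLpNorm_congr_norm_ae
  exact Filter.Eventually.of_forall fun x => by rw [norm_mul, he x, one_mul]

/-- Multiplication by a unimodular function, as a linear isometry equivalence of `L²`. -/
def mulEquiv (f : α → ℂ) (hf : Measurable f) (he : ∀ x, ‖f x‖ = 1) :
    Lp ℂ 2 μ ≃ₗᵢ[ℂ] Lp ℂ 2 μ where
  toLinearMap := mulLM f hf.aestronglyMeasurable (fun x => (he x).le)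
  invFun := mulLM (fun x => (starRingEnd ℂ) (f x))
      ((Complex.continuous_conj.measurable.comp hf).aestronglyMeasurable)
      (fun x => by rw [RCLike.norm_conj]; exact (he x).le)
  left_inv g := by
    have hone : ∀ x, (starRingEnd ℂ) (f x) * f x = 1 := fun x => by
      rw [mul_comm, Complex.mul_conj, Complex.normSq_eq_norm_sq, he x]
      norm_num
    show mulLM (fun x => (starRingEnd ℂ) (f x))
        ((Complex.continuous_conj.measurable.comp hf).aestronglyMeasurable)
        (fun x => by rw [RCLike.norm_conj]; exact (he x).le)
        (mulLM f hf.aestronglyMeasurable (fun x => (he x).le) g) = g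
    apply Lp.ext
    filter_upwards [coeFn_mulLM (fun x => (starRingEnd ℂ) (f x))
        ((Complex.continuous_conj.measurable.comp hf).aestronglyMeasurable)
        (fun x => by rw [RCLike.norm_conj]; exact (he x).le)
        (mulLM f hf.aestronglyMeasurable (fun x => (he x).le) g),
      coeFn_mulLM f hf.aestronglyMeasurable (fun x => (he x).le) g] with x h1 h2
    rw [h1, h2, ← mul_assoc, hone x, one_mul]
  right_inv g := by
    have hone : ∀ x, f x * (starRingEnd ℂ) (f x) = 1 := fun x => by
      rw [Complex.mul_conj, Complex.normSq_eq_norm_sq, he x]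
      norm_num
    show mulLM f hf.aestronglyMeasurable (fun x => (he x).le)
        (mulLM (fun x => (starRingEnd ℂ) (f x))
          ((Complex.continuous_conj.measurable.comp hf).aestronglyMeasurable)
          (fun x => by rw [RCLike.norm_conj]; exact (he x).le) g) = g
    apply Lp.ext
    filter_upwards [coeFn_mulLM f hf.aestronglyMeasurable (fun x => (he x).le)
        (mulLM (fun x => (starRingEnd ℂ) (f x))
          ((Complex.continuous_conj.measurable.comp hf).aestronglyMeasurable)
          (fun x => by rw [RCLike.norm_conj]; exact (he x).le) g),
      coeFn_mulLM (fun x => (starRingEnd ℂ) (f x))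
        ((Complex.continuous_conj.measurable.comp hf).aestronglyMeasurable)
        (fun x => by rw [RCLike.norm_conj]; exact (he x).le) g] with x h1 h2
    rw [h1, h2, ← mul_assoc, hone x, one_mul]
  norm_map' g := norm_mulLM f hf.aestronglyMeasurable he g

lemma coeFn_mulEquiv (f : α → ℂ) (hf : Measurable f) (he : ∀ x, ‖f x‖ = 1)
    (g : Lp ℂ 2 μ) : ⇑(mulEquiv f hf he g) =ᵐ[μ] fun x => f x * g x :=
  coeFn_mulLM f hf.aestronglyMeasurable (fun x => (he x).le) g

lemma mulEquiv_ne_smul (f : α → ℂ) (hf : Measurable f) (he : ∀ x, ‖f x‖ = 1)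
    (hnull : ∀ c : ℂ, μ {x | f x = c} = 0) (c : ℂ) (g : Lp ℂ 2 μ) (hg : g ≠ 0) :
    mulEquiv f hf he g ≠ c • g := by
  intro h
  have e1 := coeFn_mulEquiv f hf he g
  rw [h] at e1
  have hne : ∀ᵐ x ∂μ, f x ≠ c := by
    have := measure_eq_zero_iff_ae_notMem.mp (hnull c)
    simpa using this
  apply hg
  apply Lp.ext (g := (0 : Lp ℂ 2 μ))
  filter_upwards [e1, Lp.coeFn_smul c g, hne, Lp.coeFn_zero ℂ 2 μ] with x h1 h2 h3 h4
  rw [h4]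
  have hx : f x * g x = c * g x := by
    rw [← h1, h2]; simp [smul_eq_mul]
  have : (f x - c) * (g x : ℂ) = 0 := by rw [sub_mul, hx]; ring
  rcases mul_eq_zero.mp this with h' | h'
  · exact absurd (sub_eq_zero.mp h') h3
  · simpa using h'

lemma mulEquiv_sub_norm (f : α → ℂ) (hf : Measurable f) (he : ∀ x, ‖f x‖ = 1)
    {ε : ℝ} (hε : 0 ≤ ε) (hd : ∀ x, ‖f x - 1‖ ≤ ε) (g : Lp ℂ 2 μ) :
    ‖mulEquiv f hf he g - g‖ ≤ ε * ‖g‖ := by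
  have hsm : ‖(ε : ℂ) • g‖ = ε * ‖g‖ := by
    rw [norm_smul, Complex.norm_real, Real.norm_eq_abs, _root_.abs_of_nonneg hε]
  rw [← hsm]
  apply Lp.norm_le_norm_of_ae_le
  filter_upwards [Lp.coeFn_sub (mulEquiv f hf he g) g, coeFn_mulEquiv f hf he g,
    Lp.coeFn_smul (ε : ℂ) g] with x h1 h2 h3
  rw [h1, Pi.sub_apply, h2, h3]
  calc ‖f x * g x - g x‖ = ‖f x - 1‖ * ‖g x‖ := by rw [← sub_one_mul, norm_mul]
    _ ≤ ε * ‖g x‖ := mul_le_mul_of_nonneg_right (hd x) (norm_nonneg _)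
    _ = ‖((ε : ℂ) • ⇑g) x‖ := by
        rw [Pi.smul_apply, norm_smul, Complex.norm_real, Real.norm_eq_abs,
          _root_.abs_of_nonneg hε]

section CircleAux
open AddCircle

local instance fact01 : Fact ((0:ℝ) < 1) := ⟨one_pos⟩

instance : NullSingletonClass (@haarAddCircle (1:ℝ) fact01) := by
  constructor
  intro x
  have hv : (volume : MeasureTheory.Measure (AddCircle (1:ℝ))) {x} = 0 := by
    rw [← Metric.closedBall_zero (x := x), AddCircle.volume_closedBall]
    norm_num
  rw [AddCircle.volume_eq_smul_haarAddCircle] at hv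
  simpa [ENNReal.ofReal_one] using hv

/-- The real part of the canonical map to the circle. -/
def qc (θ : AddCircle (1:ℝ)) : ℝ := ((toCircle θ : ℂ)).re

lemma qc_cont : Continuous qc :=
  Complex.continuous_re.comp (continuous_subtype_val.comp AddCircle.continuous_toCircle)

lemma qc_abs_le (θ : AddCircle (1:ℝ)) : |qc θ| ≤ 1 := by
  have h := Complex.abs_re_le_norm ((toCircle θ : ℂ))
  rwa [Circle.norm_coe] at h

lemma qc_level_null (r : ℝ) : (@haarAddCircle (1:ℝ) fact01) {θ | qc θ = r} = 0 := by
  rcases Set.eq_empty_or_nonempty {θ | qc θ = r} with h | ⟨θ₀, hθ₀⟩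
  · rw [h]; exact measure_empty
  · set z₀ : ℂ := (toCircle θ₀ : ℂ) with hz₀
    have hsub : {θ : AddCircle (1:ℝ) | qc θ = r} ⊆
        (fun θ : AddCircle (1:ℝ) => (toCircle θ : ℂ)) ⁻¹' {z₀, (starRingEnd ℂ) z₀} := by
      intro θ hθ
      set z : ℂ := (toCircle θ : ℂ) with hz
      have e1 : ‖z‖ ^ 2 = Complex.normSq z := Complex.sq_norm z
      have e0 : ‖z₀‖ ^ 2 = Complex.normSq z₀ := Complex.sq_norm z₀
      rw [Circle.norm_coe, Complex.normSq_apply] at e1 e0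
      have hre : z.re = r := hθ
      have hre0 : z₀.re = r := hθ₀
      rw [hre] at e1
      rw [hre0] at e0
      have him : z.im ^ 2 = z₀.im ^ 2 := by nlinarith [e1, e0]
      rcases sq_eq_sq_iff_eq_or_eq_neg.mp him with h' | h'
      · left
        exact Complex.ext (by rw [hre, hre0]) h'
      · right
        refine Complex.ext ?_ ?_
        · rw [Complex.conj_re, hre, hre0]
        · rw [Complex.conj_im, h']
    apply MeasureTheory.measure_mono_null hsub
    apply Set.Finite.measure_zero
    apply Set.Finite.preimage
    · exact (Circle.coe_injective.comp (injective_toCircle one_ne_zero)).injOn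
    · exact (Set.finite_singleton _).insert _

/-- The unimodular multiplier function. -/
def fc (n : ℕ) (θ : AddCircle (1:ℝ)) : ℂ :=
  Complex.exp (((qc θ / (n + 1) : ℝ) : ℂ) * Complex.I)

lemma fc_meas (n : ℕ) : Measurable (fc n) :=
  (Complex.continuous_exp.comp
    ((Complex.continuous_ofReal.comp (qc_cont.div_const _)).mul continuous_const)).measurable

lemma fc_norm (n : ℕ) (θ : AddCircle (1:ℝ)) : ‖fc n θ‖ = 1 := by
  exact Complex.norm_exp_ofReal_mul_I _

lemma fc_arg_le (n : ℕ) (θ : AddCircle (1:ℝ)) : |qc θ / (n + 1)| ≤ 1 / (n + 1) := by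
  rw [abs_div, abs_of_pos (show (0:ℝ) < (n:ℝ) + 1 by positivity)]
  gcongr
  exact qc_abs_le θ

lemma fc_arg_le' (n : ℕ) (θ : AddCircle (1:ℝ)) : |qc θ / (n + 1)| ≤ 1 := by
  refine (fc_arg_le n θ).trans ?_
  rw [div_le_one (show (0:ℝ) < (n:ℝ) + 1 by positivity)]
  simp

lemma fc_level_null (n : ℕ) (c : ℂ) : (@haarAddCircle (1:ℝ) fact01) {θ | fc n θ = c} = 0 := by
  rcases Set.eq_empty_or_nonempty {θ | fc n θ = c} with h | ⟨θ₀, hθ₀⟩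
  · rw [h]; exact measure_empty
  · apply MeasureTheory.measure_mono_null ?_ (qc_level_null (qc θ₀))
    intro θ hθ
    have hexp : Complex.exp ((((qc θ / (n + 1) : ℝ) : ℂ) - ((qc θ₀ / (n + 1) : ℝ) : ℂ))
        * Complex.I) = 1 := by
      rw [sub_mul, Complex.exp_sub]
      rw [show Complex.exp (((qc θ / (n + 1) : ℝ) : ℂ) * Complex.I) = c from hθ,
        show Complex.exp (((qc θ₀ / (n + 1) : ℝ) : ℂ) * Complex.I) = c from hθ₀]
      apply div_self
      intro h0
      have := fc_norm n θ₀
      rw [show fc n θ₀ = c from hθ₀, h0] at this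
      simpa using this
    obtain ⟨k, hk⟩ := Complex.exp_eq_one_iff.mp hexp
    have him := congrArg Complex.im hk
    simp only [Complex.mul_im, Complex.sub_re, Complex.ofReal_re, Complex.I_im,
      Complex.sub_im, Complex.ofReal_im, Complex.I_re, Complex.mul_re, mul_zero, mul_one,
      sub_zero, zero_mul, add_zero, Complex.intCast_im, Complex.intCast_re] at him
    norm_num at him
    -- him : qc θ / (n+1) - qc θ₀ / (n+1) = k * (2 * π)  (roughly)
    have hk0 : k = 0 := by
      by_contra h'
      have h1 : (1:ℝ) ≤ |(k:ℝ)| := by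
        rw [← Int.cast_abs]
        exact_mod_cast Int.one_le_abs (by simpa using h')
      have hb1 := fc_arg_le' n θ
      have hb2 := fc_arg_le' n θ₀
      have hpi := Real.pi_gt_three
      have habs : |qc θ / (n + 1) - qc θ₀ / (n + 1)| ≤ 2 := by
        calc |qc θ / (n + 1) - qc θ₀ / (n + 1)|
            ≤ |qc θ / (n + 1)| + |qc θ₀ / (n + 1)| := abs_sub _ _
          _ ≤ 2 := by linarith
      rw [him] at habs
      rw [abs_mul] at habs
      have h2pi : |2 * Real.pi| = 2 * Real.pi := abs_of_pos (by linarith)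
      rw [h2pi] at habs
      nlinarith
    rw [hk0] at him
    simp only [Int.cast_zero, zero_mul] at him
    have : qc θ = qc θ₀ := by
      have hpos : ((n:ℝ) + 1) ≠ 0 := by positivity
      field_simp at him
      linarith [him]
    exact this

lemma fc_dist (n : ℕ) (θ : AddCircle (1:ℝ)) : ‖fc n θ - 1‖ ≤ 2 / (n + 1) := by
  have h1 : ‖(((qc θ / (n + 1) : ℝ) : ℂ) * Complex.I)‖ ≤ 1 := by
    rw [norm_mul, Complex.norm_I, mul_one, Complex.norm_real, Real.norm_eq_abs]
    exact fc_arg_le' n θ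
  have h2 := Complex.norm_exp_sub_one_le h1
  refine h2.trans ?_
  rw [norm_mul, Complex.norm_I, mul_one, Complex.norm_real, Real.norm_eq_abs]
  calc 2 * |qc θ / (n + 1)| ≤ 2 * (1 / (n + 1)) := by
        have := fc_arg_le n θ
        linarith
    _ = 2 / (n + 1) := by ring

end CircleAux

end Stmt4Aux
end Stmt4Aux

open Stmt4Aux AddCircle in
/-- On a separable infinite-dimensional Hilbert space there is a sequence of unitary
operators without eigenvalues of modulus 1 (i.e. almost weakly stable) converging to the
identity in operator norm. -/
theorem stmt4 {H : Type*} [NormedAddCommGroup H] [InnerProductSpace ℂ H] [CompleteSpace H]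
    [TopologicalSpace.SeparableSpace H] (hinf : ¬ FiniteDimensional ℂ H) :
    ∃ T : ℕ → H →L[ℂ] H,
      (∀ n, T n ∈ unitary (H →L[ℂ] H)) ∧
      (∀ n (c : ℂ), ‖c‖ = 1 → ∀ x : H, x ≠ 0 → T n x ≠ c • x) ∧
      Tendsto (fun n => ‖T n - 1‖) atTop (𝓝 0) := by

  obtain ⟨w, b, hb⟩ := exists_hilbertBasis ℂ H
  have horth : Orthonormal ℂ ((↑) : w → H) := hb ▸ b.orthonormal
  -- countability of `w`
  have hcw : w.Countable := by
    apply Set.PairwiseDisjoint.countable_of_isOpen (s := fun x : H => Metric.ball x 2⁻¹)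
    · intro x hx y hy hxy
      apply Metric.ball_disjoint_ball
      have hx1 : ‖((⟨x, hx⟩ : w) : H)‖ = 1 := horth.1 ⟨x, hx⟩
      have hy1 : ‖((⟨y, hy⟩ : w) : H)‖ = 1 := horth.1 ⟨y, hy⟩
      have hxy' : (⟨x, hx⟩ : w) ≠ ⟨y, hy⟩ := fun h => hxy (congrArg Subtype.val h)
      have hin : (inner (𝕜 := ℂ) x y) = 0 := horth.2 hxy'
      have hsq : ‖x - y‖ ^ 2 = 2 := by
        rw [@norm_sub_sq ℂ]
        simp only at hx1 hy1
        rw [hx1, hy1, hin]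
        norm_num
      have : (1:ℝ) ≤ ‖x - y‖ := by nlinarith [norm_nonneg (x - y)]
      rw [dist_eq_norm]
      linarith
    · intro i _; exact Metric.isOpen_ball
    · intro i _; exact ⟨i, Metric.mem_ball_self (by norm_num)⟩
  -- infiniteness of `w`
  have hrange : Set.range ⇑b = w := by rw [hb]; exact Subtype.range_coe
  have hiw : w.Infinite := by
    by_contra hfin
    rw [Set.not_infinite] at hfin
    apply hinf
    have hdense : (Submodule.span ℂ w).topologicalClosure = ⊤ := by
      rw [← hrange]; exact b.dense_span
    have hclosed : IsClosed (Submodule.span ℂ w : Set H) := by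
      haveI : FiniteDimensional ℂ (Submodule.span ℂ w) :=
        FiniteDimensional.span_of_finite ℂ hfin
      exact Submodule.closed_of_finiteDimensional _
    rw [IsClosed.submodule_topologicalClosure_eq hclosed] at hdense
    exact ⟨⟨hfin.toFinset, by rw [Set.Finite.coe_toFinset]; exact hdense⟩⟩
  haveI : Countable ↥w := hcw.to_subtype
  haveI : Infinite ↥w := hiw.to_subtype
  haveI : Denumerable ↥w := (nonempty_denumerable_iff.mpr ⟨‹_›, ‹_›⟩).some
  let εe : ℤ ≃ ↥w := (Denumerable.eqv ℤ).trans (Denumerable.eqv ↥w).symm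
  have hv : Orthonormal ℂ (⇑b ∘ εe) := b.orthonormal.comp εe εe.injective
  have hdense : (Submodule.span ℂ w).topologicalClosure = ⊤ := by
    rw [← hrange]; exact b.dense_span
  have hspan : ⊤ ≤ (Submodule.span ℂ (Set.range (⇑b ∘ εe))).topologicalClosure := by
    rw [Set.range_comp, εe.surjective.range_eq, Set.image_univ]
    rw [hrange]
    exact hdense.ge
  let b2 : HilbertBasis ℤ ℂ H := HilbertBasis.mk hv hspan
  haveI : Fact ((0:ℝ) < 1) := fact01
  let e : H ≃ₗᵢ[ℂ] Lp ℂ 2 (@haarAddCircle (1:ℝ) fact01) :=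
    b2.repr.trans fourierBasis.repr.symm
  let U : ℕ → (Lp ℂ 2 (@haarAddCircle (1:ℝ) fact01) ≃ₗᵢ[ℂ]
      Lp ℂ 2 (@haarAddCircle (1:ℝ) fact01)) :=
    fun n => mulEquiv (fc n) (fc_meas n) (fc_norm n)
  let V : ℕ → H ≃ₗᵢ[ℂ] H := fun n => (e.trans (U n)).trans e.symm
  refine ⟨fun n => ((Unitary.linearIsometryEquiv (𝕜 := ℂ)).symm (V n) : H →L[ℂ] H),
    fun n => ((Unitary.linearIsometryEquiv (𝕜 := ℂ)).symm (V n)).2, ?_, ?_⟩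
  · intro n c hc x hx hEq
    have hx' : e x ≠ 0 := fun h => hx (by simpa using e.map_eq_zero_iff.mp h)
    have hVx : V n x = c • x := hEq
    have h2 : e.symm (U n (e x)) = c • x := hVx
    have h3 : U n (e x) = c • e x := by
      have := congrArg e h2
      rwa [e.apply_symm_apply, _root_.map_smul] at this
    exact mulEquiv_ne_smul (fc n) (fc_meas n) (fc_norm n) (fc_level_null n) c (e x) hx' h3
  · apply squeeze_zero (fun n => norm_nonneg _) (g := fun n : ℕ => 2 / ((n:ℝ) + 1))
    · intro n
      apply ContinuousLinearMap.opNorm_le_bound _ (by positivity)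
      intro x
      have h1 : (((Unitary.linearIsometryEquiv (𝕜 := ℂ)).symm (V n) : H →L[ℂ] H)
          - (1 : H →L[ℂ] H)) x = V n x - x := by
        simp [ContinuousLinearMap.sub_apply]
      rw [h1]
      have h2 : V n x - x = e.symm (U n (e x) - e x) := by
        show e.symm (U n (e x)) - x = _
        rw [map_sub, e.symm_apply_apply]
      rw [h2, e.symm.norm_map]
      have h3 := mulEquiv_sub_norm (fc n) (fc_meas n) (fc_norm n)
        (by positivity : (0:ℝ) ≤ 2 / ((n:ℝ) + 1)) (fc_dist n) (e x)
      calc ‖U n (e x) - e x‖ ≤ 2 / ((n:ℝ) + 1) * ‖e x‖ := h3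
        _ = 2 / ((n:ℝ) + 1) * ‖x‖ := by rw [e.norm_map]
    · have h5 : (fun n : ℕ => 2 / ((n:ℝ) + 1)) =
          (fun m : ℕ => (2:ℝ) / m) ∘ (fun n : ℕ => n + 1) := by
        funext n
        simp only [Function.comp_apply]
        push_cast
        ring
      rw [h5]
      exact (tendsto_const_div_atTop_nhds_zero_nat 2).comp
        (Filter.tendsto_add_atTop_nat 1)
end

section
/- Let H be a separable infinite-dimensional Hilbert space and let U denote the complete metric space of unitary operators on H with the strong* operator topology. Then the set of weakly stable unitary operators (those U with ⟨U^n x, y⟩ → 0 for all x, y ∈ H) is of first category (meager) in U. -/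
open Filter Topology

/-- The strong* operator topology on the set of unitary operators on a Hilbert space:
induced by pointwise (strong) convergence of the operators and of their adjoints. -/
noncomputable def strongStarUnitaryTopology {H : Type*} [NormedAddCommGroup H]
    [InnerProductSpace ℂ H] [CompleteSpace H] :
    TopologicalSpace {U : H →L[ℂ] H // U ∈ unitary (H →L[ℂ] H)} :=
  TopologicalSpace.induced
    (fun U => ((fun x => U.1 x, fun x => ContinuousLinearMap.adjoint U.1 x) :
      (H → H) × (H → H))) inferInstance

attribute [local instance 2000] strongStarUnitaryTopology

open scoped InnerProductSpace

namespace StrongStarMeagreAux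

variable {H : Type*} [NormedAddCommGroup H] [InnerProductSpace ℂ H] [CompleteSpace H]

local notation "𝕌" => {U : H →L[ℂ] H // U ∈ unitary (H →L[ℂ] H)}

lemma continuous_emb : Continuous fun U : 𝕌 =>
    ((fun x => U.1 x, fun x => ContinuousLinearMap.adjoint U.1 x) : (H → H) × (H → H)) :=
  continuous_induced_dom

lemma continuous_eval (z : H) : Continuous fun U : 𝕌 => U.1 z :=
  (continuous_apply z).comp (continuous_fst.comp continuous_emb)

lemma continuous_op_apply {f : 𝕌 → H} (hf : Continuous f) :
    Continuous fun U : 𝕌 => U.1 (f U) := by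
  rw [continuous_iff_continuousAt]
  intro V
  rw [ContinuousAt, Metric.tendsto_nhds]
  intro ε hε
  have h1 : ∀ᶠ U : 𝕌 in 𝓝 V, dist (f U) (f V) < ε / 2 :=
    Metric.tendsto_nhds.mp hf.continuousAt (ε / 2) (by linarith)
  have h2 : ∀ᶠ U : 𝕌 in 𝓝 V, dist (U.1 (f V)) (V.1 (f V)) < ε / 2 :=
    Metric.tendsto_nhds.mp (continuous_eval (f V)).continuousAt (ε / 2) (by linarith)
  filter_upwards [h1, h2] with U hU1 hU2
  have key : dist (U.1 (f U)) (U.1 (f V)) = dist (f U) (f V) := by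
    rw [dist_eq_norm, dist_eq_norm, ← map_sub]
    exact ContinuousLinearMap.norm_map_of_mem_unitary U.2 _
  calc dist (U.1 (f U)) (V.1 (f V))
      ≤ dist (U.1 (f U)) (U.1 (f V)) + dist (U.1 (f V)) (V.1 (f V)) := dist_triangle _ _ _
    _ < ε := by rw [key]; linarith

lemma continuous_pow_apply (z : H) (n : ℕ) : Continuous fun U : 𝕌 => (U.1 ^ n) z := by
  induction n with
  | zero =>
    simp only [pow_zero, ContinuousLinearMap.one_apply]
    exact continuous_const
  | succ n ih =>
    simp only [pow_succ', ContinuousLinearMap.mul_apply]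
    exact continuous_op_apply ih

set_option maxHeartbeats 1000000 in
/-- The key construction: a unitary agreeing with `U` (and with its adjoint) on a
prescribed finite set, which acts on a finite-dimensional subspace containing `x₀`
and is the identity on its orthogonal complement; by compactness such a unitary has
recurrent behaviour at `x₀`. -/
lemma key_construction (U : H →L[ℂ] H) (hU : U ∈ unitary (H →L[ℂ] H))
    (s : Set H) (hs : s.Finite) (x₀ : H) (hx₀ : ‖x₀‖ = 1) (N : ℕ) :
    ∃ V : 𝕌, (∀ z ∈ s, V.1 z = U z) ∧
      (∀ z ∈ s, ContinuousLinearMap.adjoint V.1 z = ContinuousLinearMap.adjoint U z) ∧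
      ∃ n, N ≤ n ∧ 1/2 < ‖(⟪(V.1 ^ n) x₀, x₀⟫_ℂ)‖ := by
  classical
  set A : H →L[ℂ] H := ContinuousLinearMap.adjoint U with hA
  set E : Submodule ℂ H := Submodule.span ℂ (insert x₀ (s ∪ A '' s)) with hE
  have hEfin : FiniteDimensional ℂ E :=
    FiniteDimensional.span_of_finite ℂ (((hs.union (hs.image _)).insert x₀))
  set K : Submodule ℂ H := E ⊔ E.map (U : H →ₗ[ℂ] H) with hK
  haveI : FiniteDimensional ℂ E := hEfin
  haveI : FiniteDimensional ℂ (E.map (U : H →ₗ[ℂ] H)) := Module.Finite.map E _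
  haveI hKfin : FiniteDimensional ℂ K := Submodule.finiteDimensional_sup _ _
  have hEK : E ≤ K := le_sup_left
  have hx₀E : x₀ ∈ E := Submodule.subset_span (Set.mem_insert _ _)
  have hsE : ∀ z ∈ s, z ∈ E := fun z hz =>
    Submodule.subset_span (Set.mem_insert_of_mem _ (Set.mem_union_left _ hz))
  have hsE' : ∀ z ∈ s, A z ∈ E := fun z hz =>
    Submodule.subset_span (Set.mem_insert_of_mem _ (Set.mem_union_right _ ⟨z, hz, rfl⟩))
  have hUE : ∀ z ∈ E, U z ∈ K := fun z hz =>
    le_sup_right (α := Submodule ℂ H) (Submodule.mem_map_of_mem hz)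
  set d : ℕ := Module.finrank ℂ E with hd
  set m : ℕ := Module.finrank ℂ K with hm
  have hdm : d ≤ m := Submodule.finrank_mono hEK
  set bE := stdOrthonormalBasis ℂ E with hbE
  set v : Fin d → H := fun i => (bE i : H) with hv
  have hvE : ∀ i, v i ∈ E := fun i => (bE i).2
  have hvorth : ∀ i j, ⟪v i, v j⟫_ℂ = if i = j then 1 else 0 := by
    intro i j
    have h := orthonormal_iff_ite.mp bE.orthonormal i j
    rw [Submodule.coe_inner] at h
    exact h
  have hUvorth : ∀ i j, ⟪U (v i), U (v j)⟫_ℂ = if i = j then 1 else 0 := fun i j => by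
    rw [ContinuousLinearMap.inner_map_map_of_mem_unitary hU]; exact hvorth i j
  set u : Fin m → K := fun i =>
    if h : (i : ℕ) < d then ⟨v ⟨i, h⟩, hEK (hvE _)⟩ else 0 with hu
  set w : Fin m → K := fun i =>
    if h : (i : ℕ) < d then ⟨U (v ⟨i, h⟩), hUE _ (hvE _)⟩ else 0 with hw
  set sset : Set (Fin m) := {i | (i : ℕ) < d} with hsset
  have hcard : Module.finrank ℂ K = Fintype.card (Fin m) := by simp [hm]
  have huorth : Orthonormal ℂ (sset.restrict u) := by
    rw [orthonormal_iff_ite]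
    intro i j
    have hi : ((i : Fin m) : ℕ) < d := i.2
    have hj : ((j : Fin m) : ℕ) < d := j.2
    have : ⟪sset.restrict u i, sset.restrict u j⟫_ℂ
        = ⟪v ⟨(i : Fin m), hi⟩, v ⟨(j : Fin m), hj⟩⟫_ℂ := by
      show ⟪((u i : K) : H), ((u j : K) : H)⟫_ℂ = _
      simp only [hu, dif_pos hi, dif_pos hj, Submodule.coe_inner]
    rw [this, hvorth]
    congr 1
    simp only [eq_iff_iff, Fin.mk.injEq]
    constructor
    · intro h; exact Subtype.ext (Fin.ext h)
    · intro h; rw [h]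
  have hworth : Orthonormal ℂ (sset.restrict w) := by
    rw [orthonormal_iff_ite]
    intro i j
    have hi : ((i : Fin m) : ℕ) < d := i.2
    have hj : ((j : Fin m) : ℕ) < d := j.2
    have : ⟪sset.restrict w i, sset.restrict w j⟫_ℂ
        = ⟪U (v ⟨(i : Fin m), hi⟩), U (v ⟨(j : Fin m), hj⟩)⟫_ℂ := by
      show ⟪((w i : K) : H), ((w j : K) : H)⟫_ℂ = _
      simp only [hw, dif_pos hi, dif_pos hj, Submodule.coe_inner]
    rw [this, hUvorth]
    congr 1
    simp only [eq_iff_iff, Fin.mk.injEq]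
    constructor
    · intro h; exact Subtype.ext (Fin.ext h)
    · intro h; rw [h]
  obtain ⟨b, hb⟩ := huorth.exists_orthonormalBasis_extension_of_card_eq hcard
  obtain ⟨c, hc⟩ := hworth.exists_orthonormalBasis_extension_of_card_eq hcard
  set V₀ : K ≃ₗᵢ[ℂ] K := b.repr.trans c.repr.symm with hV₀def
  have hV₀b : ∀ i, V₀ (b i) = c i := by
    intro i
    simp only [hV₀def, LinearIsometryEquiv.trans_apply, OrthonormalBasis.repr_self,
      OrthonormalBasis.repr_symm_single]
  have hagree : ∀ z (hz : z ∈ E), ((V₀ ⟨z, hEK hz⟩ : K) : H) = U z := by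
    have hext : (K.subtype ∘ₗ ((V₀.toLinearEquiv : K →ₗ[ℂ] K) ∘ₗ Submodule.inclusion hEK))
        = ((U : H →ₗ[ℂ] H) ∘ₗ E.subtype) := by
      apply Module.Basis.ext bE.toBasis
      intro i
      have hi' : ((Fin.castLE hdm i : Fin m) : ℕ) < d := by
        simpa using i.2
      have hincl : Submodule.inclusion hEK (bE.toBasis i) = u (Fin.castLE hdm i) := by
        apply Subtype.ext
        simp only [hu, dif_pos hi']
        simp [hv]
      have hbu : b (Fin.castLE hdm i) = u (Fin.castLE hdm i) := hb _ hi'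
      have hcw : c (Fin.castLE hdm i) = w (Fin.castLE hdm i) := hc _ hi'
      simp only [LinearMap.comp_apply, Submodule.subtype_apply]
      rw [hincl, ← hbu]
      have : (V₀.toLinearEquiv : K →ₗ[ℂ] K) (b (Fin.castLE hdm i)) = c (Fin.castLE hdm i) :=
        hV₀b _
      rw [this, hcw]
      simp only [hw, dif_pos hi']
      simp [hv]
    intro z hz
    exact LinearMap.congr_fun hext ⟨z, hz⟩
  -- the global linear maps
  set P := K.orthogonalProjectionOnto with hP
  set f : H →ₗ[ℂ] H :=
    { toFun := fun x => ((V₀ (P x) : K) : H) + (x - (P x : H))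
      map_add' := by
        intro x y
        simp only [map_add, Submodule.coe_add]
        abel
      map_smul' := by
        intro a x
        simp only [map_smul, Submodule.coe_smul, RingHom.id_apply, smul_sub, smul_add] } with hf
  set g : H →ₗ[ℂ] H :=
    { toFun := fun x => ((V₀.symm (P x) : K) : H) + (x - (P x : H))
      map_add' := by
        intro x y
        simp only [map_add, Submodule.coe_add]
        abel
      map_smul' := by
        intro a x
        simp only [map_smul, Submodule.coe_smul, RingHom.id_apply, smul_sub, smul_add] } with hg
  have hPkey : ∀ (y : K) (x : H), P ((y : H) + (x - (P x : H))) = y := by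
    intro y x
    have h1 : P (y : H) = y := Submodule.orthogonalProjectionOnto_mem_subspace_eq_self y
    have h2 : P ((P x : H)) = P x := Submodule.orthogonalProjectionOnto_mem_subspace_eq_self (P x)
    rw [map_add, map_sub, h1, h2]
    abel
  have hPf : ∀ x, P (f x) = V₀ (P x) := fun x => hPkey (V₀ (P x)) x
  have hPg : ∀ x, P (g x) = V₀.symm (P x) := fun x => hPkey (V₀.symm (P x)) x
  have hgf : ∀ x, g (f x) = x := by
    intro x
    show ((V₀.symm (P (f x)) : K) : H) + (f x - (P (f x) : H)) = x
    rw [hPf, LinearIsometryEquiv.symm_apply_apply]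
    show ((P x : K) : H) + ((((V₀ (P x) : K) : H) + (x - (P x : H))) - ((V₀ (P x) : K) : H)) = x
    abel
  have hfg : ∀ x, f (g x) = x := by
    intro x
    show ((V₀ (P (g x)) : K) : H) + (g x - (P (g x) : H)) = x
    rw [hPg, LinearIsometryEquiv.apply_symm_apply]
    show ((P x : K) : H)
        + ((((V₀.symm (P x) : K) : H) + (x - (P x : H))) - ((V₀.symm (P x) : K) : H)) = x
    abel
  have hexpand : ∀ (a c' : K) (b' d' : H), b' ∈ Kᗮ → d' ∈ Kᗮ →
      ⟪(a : H) + b', (c' : H) + d'⟫_ℂ = ⟪(a : H), (c' : H)⟫_ℂ + ⟪b', d'⟫_ℂ := by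
    intro a c' b' d' hb' hd'
    rw [inner_add_left, inner_add_right, inner_add_right,
      Submodule.inner_right_of_mem_orthogonal a.2 hd',
      Submodule.inner_left_of_mem_orthogonal c'.2 hb']
    ring
  have hinner : ∀ x y, ⟪f x, f y⟫_ℂ = ⟪x, y⟫_ℂ := by
    intro x y
    have hx' : x - (P x : H) ∈ Kᗮ := K.sub_starProjection_mem_orthogonal x
    have hy' : y - (P y : H) ∈ Kᗮ := K.sub_starProjection_mem_orthogonal y
    have lhs : ⟪f x, f y⟫_ℂ
        = ⟪((V₀ (P x) : K) : H), ((V₀ (P y) : K) : H)⟫_ℂ + ⟪x - (P x : H), y - (P y : H)⟫_ℂ :=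
      hexpand _ _ _ _ hx' hy'
    have rhs : ⟪x, y⟫_ℂ
        = ⟪((P x : K) : H), ((P y : K) : H)⟫_ℂ + ⟪x - (P x : H), y - (P y : H)⟫_ℂ := by
      have hxdec : x = ((P x : K) : H) + (x - (P x : H)) := by abel
      have hydec : y = ((P y : K) : H) + (y - (P y : H)) := by abel
      conv_lhs => rw [hxdec, hydec]
      exact hexpand _ _ _ _ hx' hy'
    have hmid : ⟪((V₀ (P x) : K) : H), ((V₀ (P y) : K) : H)⟫_ℂ
        = ⟪((P x : K) : H), ((P y : K) : H)⟫_ℂ := by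
      rw [← Submodule.coe_inner, ← Submodule.coe_inner, LinearIsometryEquiv.inner_map_map]
    rw [lhs, hmid, ← rhs]
  set eqv : H ≃ₗ[ℂ] H :=
    LinearEquiv.ofLinear f g (LinearMap.ext hfg) (LinearMap.ext hgf) with heqv
  set e : H ≃ₗᵢ[ℂ] H := eqv.isometryOfInner hinner with he
  have he_apply : ∀ x, e x = ((V₀ (P x) : K) : H) + (x - (P x : H)) := fun _ => rfl
  set V : 𝕌 := ⟨(e : H →L[ℂ] H), (Unitary.linearIsometryEquiv.symm e).2⟩ with hVdef
  have hVapp : ∀ x, V.1 x = e x := fun _ => rfl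
  have hVE : ∀ z ∈ E, V.1 z = U z := by
    intro z hz
    have hzK : z ∈ K := hEK hz
    have hPz : P z = ⟨z, hzK⟩ := Submodule.orthogonalProjectionOnto_mem_subspace_eq_self ⟨z, hzK⟩
    rw [hVapp, he_apply, hPz]
    have := hagree z hz
    rw [this]
    have hPz' : ((⟨z, hzK⟩ : K) : H) = z := rfl
    rw [hPz']
    abel
  have hstar : ContinuousLinearMap.adjoint V.1 = (e.symm : H →L[ℂ] H) :=
    LinearIsometryEquiv.adjoint_eq_symm e
  have hVstar : ∀ z ∈ s, ContinuousLinearMap.adjoint V.1 z = A z := by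
    intro z hz
    have haz : A z ∈ E := hsE' z hz
    have h1 : V.1 (A z) = U (A z) := hVE _ haz
    have h2 : U (A z) = z := by
      have hmul : U * star U = 1 := Unitary.mul_star_self_of_mem hU
      calc U (A z) = (U * star U) z := by
            rw [ContinuousLinearMap.star_eq_adjoint]; rfl
        _ = z := by rw [hmul]; rfl
    rw [hstar]
    have h3 : e (A z) = z := by
      have hh : e (A z) = V.1 (A z) := rfl
      rw [hh, h1, h2]
    show e.symm z = A z
    refine e.injective ?_
    rw [LinearIsometryEquiv.apply_symm_apply, h3]
  -- recurrence
  have hx₀K : x₀ ∈ K := hEK hx₀E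
  set seq : ℕ → K := fun n => (fun k => V₀ k)^[n] ⟨x₀, hx₀K⟩ with hseqdef
  have hseq0 : seq 0 = ⟨x₀, hx₀K⟩ := rfl
  have hseqS : ∀ n, seq (n + 1) = V₀ (seq n) := fun n =>
    Function.iterate_succ_apply' _ _ _
  have hVK : ∀ y : K, V.1 (y : H) = ((V₀ y : K) : H) := by
    intro y
    rw [hVapp, he_apply]
    have hPy : P (y : H) = y := Submodule.orthogonalProjectionOnto_mem_subspace_eq_self y
    rw [hPy]
    abel
  have hpow : ∀ n, (V.1 ^ n) x₀ = ((seq n : K) : H) := by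
    intro n
    induction n with
    | zero => simp [hseq0]
    | succ n ih =>
      rw [pow_succ', ContinuousLinearMap.mul_apply, ih, hVK, hseqS]
  have hdist_seq : ∀ a b, dist (seq (a + b)) (seq b) = dist (seq a) (seq 0) := by
    intro a b
    induction b with
    | zero => rfl
    | succ b ih =>
      have h1 : a + (b + 1) = (a + b) + 1 := by omega
      rw [h1, hseqS, hseqS, LinearIsometryEquiv.dist_map]
      exact ih
  have hsphere : ∀ n, seq n ∈ Metric.sphere (0 : K) 1 := by
    intro n
    induction n with
    | zero =>
      rw [hseq0, mem_sphere_zero_iff_norm]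
      rw [Submodule.coe_norm]
      exact hx₀
    | succ n ih =>
      rw [hseqS, mem_sphere_zero_iff_norm, LinearIsometryEquiv.norm_map]
      rwa [mem_sphere_zero_iff_norm] at ih
  set g' : ℕ → K := fun k => seq (k * (N + 1)) with hg'
  obtain ⟨p, -, φ, hφ, hconv⟩ :=
    (isCompact_sphere (0 : K) 1).tendsto_subseq (fun k => hsphere (k * (N + 1)) : ∀ k, g' k ∈ _)
  have hc2 : ∀ᶠ k in atTop, dist (g' (φ k)) p < 1/4 :=
    Metric.tendsto_nhds.mp hconv (1/4) (by norm_num)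
  rw [eventually_atTop] at hc2
  obtain ⟨k0, hk0⟩ := hc2
  have hab : φ k0 < φ (k0 + 1) := hφ (Nat.lt_succ_self k0)
  set a := φ k0 with ha
  set b := φ (k0 + 1) with hb'
  have hdistab : dist (g' b) (g' a) < 1/2 := by
    have h1 := hk0 k0 le_rfl
    have h2 := hk0 (k0 + 1) (Nat.le_succ k0)
    calc dist (g' b) (g' a) ≤ dist (g' b) p + dist p (g' a) := dist_triangle _ _ _
      _ < 1/4 + 1/4 := by
          rw [dist_comm p (g' a)]
          exact add_lt_add h2 h1
      _ = 1/2 := by norm_num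
  set n : ℕ := (b - a) * (N + 1) with hn
  have hNn : N ≤ n := by
    have h1 : 1 ≤ b - a := by omega
    calc N ≤ N + 1 := Nat.le_succ N
      _ = 1 * (N + 1) := (one_mul _).symm
      _ ≤ (b - a) * (N + 1) := Nat.mul_le_mul_right _ h1
  have hsum : n + a * (N + 1) = b * (N + 1) := by
    rw [hn, ← Nat.add_mul]
    congr 1
    omega
  have hdistn : dist (seq n) (seq 0) < 1/2 := by
    have := hdist_seq n (a * (N + 1))
    rw [hsum] at this
    rw [← this]
    exact hdistab
  refine ⟨V, (fun z hz => hVE z (hsE z hz)), hVstar, n, hNn, ?_⟩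
  have hdiff : ‖(V.1 ^ n) x₀ - x₀‖ < 1/2 := by
    rw [hpow]
    have : ((seq n : K) : H) - x₀ = (((seq n - seq 0 : K) : K) : H) := by
      rw [Submodule.coe_sub, hseq0]
    rw [this, ← Submodule.coe_norm, ← dist_eq_norm]
    exact hdistn
  have hid : ⟪x₀, x₀⟫_ℂ = ⟪(V.1 ^ n) x₀, x₀⟫_ℂ - ⟪(V.1 ^ n) x₀ - x₀, x₀⟫_ℂ := by
    rw [inner_sub_left]
    ring
  have h3 : ‖⟪x₀, x₀⟫_ℂ‖ = 1 := by
    rw [inner_self_eq_norm_sq_to_K, hx₀]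
    norm_num
  have h4 : ‖⟪x₀, x₀⟫_ℂ‖ ≤ ‖⟪(V.1 ^ n) x₀, x₀⟫_ℂ‖ + ‖⟪(V.1 ^ n) x₀ - x₀, x₀⟫_ℂ‖ := by
    rw [hid]
    exact norm_sub_le _ _
  have h5 : ‖⟪(V.1 ^ n) x₀ - x₀, x₀⟫_ℂ‖ ≤ ‖(V.1 ^ n) x₀ - x₀‖ * ‖x₀‖ := norm_inner_le_norm _ _
  rw [hx₀, mul_one] at h5
  linarith

end StrongStarMeagreAux

open StrongStarMeagreAux in
/-- In the space of unitary operators on a separable infinite-dimensional Hilbert space,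
endowed with the strong* operator topology, the weakly stable unitaries form a set of
first category (a meager set). -/
theorem stmt10 {H : Type*} [NormedAddCommGroup H] [InnerProductSpace ℂ H] [CompleteSpace H]
    [TopologicalSpace.SeparableSpace H] (hinf : ¬ FiniteDimensional ℂ H) :
    @IsMeagre {U : H →L[ℂ] H // U ∈ unitary (H →L[ℂ] H)} strongStarUnitaryTopology
      {U | ∀ x y : H,
        Tendsto (fun n : ℕ => (inner ℂ ((U.1 ^ n) x) y : ℂ)) atTop (𝓝 0)} := by
  classical
  haveI : Nontrivial H := by
    by_contra h
    rw [not_nontrivial_iff_subsingleton] at h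
    exact hinf (Module.Finite.of_basis (Module.Basis.empty (ι := Fin 0) (R := ℂ) H))
  obtain ⟨x₀, hx₀⟩ : ∃ x : H, ‖x‖ = 1 := exists_norm_eq H (by norm_num : (0:ℝ) ≤ 1)
  set 𝕌 := {U : H →L[ℂ] H // U ∈ unitary (H →L[ℂ] H)} with h𝕌
  set F : ℕ → Set 𝕌 := fun N =>
    {U | ∀ n, N ≤ n → ‖(⟪(U.1 ^ n) x₀, x₀⟫_ℂ)‖ ≤ 1/2} with hF
  have hFclosed : ∀ N, IsClosed (F N) := by
    intro N
    have heq : F N = ⋂ n, {U : 𝕌 | N ≤ n → ‖(⟪(U.1 ^ n) x₀, x₀⟫_ℂ)‖ ≤ 1/2} := by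
      ext U; simp [hF, Set.mem_iInter]
    rw [heq]
    apply isClosed_iInter
    intro n
    by_cases hn : N ≤ n
    · have : {U : 𝕌 | N ≤ n → ‖(⟪(U.1 ^ n) x₀, x₀⟫_ℂ)‖ ≤ 1/2}
          = {U : 𝕌 | ‖(⟪(U.1 ^ n) x₀, x₀⟫_ℂ)‖ ≤ 1/2} := by
        ext U; simp [hn]
      rw [this]
      exact isClosed_le (((continuous_pow_apply x₀ n).inner continuous_const).norm)
        continuous_const
    · have : {U : 𝕌 | N ≤ n → ‖(⟪(U.1 ^ n) x₀, x₀⟫_ℂ)‖ ≤ 1/2} = Set.univ := by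
        ext U; simp [hn]
      rw [this]
      exact isClosed_univ
  have hFint : ∀ N, interior (F N) = ∅ := by
    intro N
    rw [Set.eq_empty_iff_forall_notMem]
    intro U hU
    rw [mem_interior_iff_mem_nhds] at hU
    have hnh : (𝓝 U) = Filter.comap (fun W : 𝕌 =>
        ((fun x => W.1 x, fun x => ContinuousLinearMap.adjoint W.1 x) : (H → H) × (H → H)))
        (𝓝 (((fun x => U.1 x, fun x => ContinuousLinearMap.adjoint U.1 x) :
          (H → H) × (H → H)))) :=
      nhds_induced _ U
    rw [hnh, Filter.mem_comap] at hU
    obtain ⟨t, ht, hsub⟩ := hU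
    rw [mem_nhds_prod_iff] at ht
    obtain ⟨u', hu', v', hv', huv⟩ := ht
    rw [nhds_pi, Filter.mem_pi] at hu' hv'
    obtain ⟨I₁, hI₁fin, t₁, ht₁, hsub₁⟩ := hu'
    obtain ⟨I₂, hI₂fin, t₂, ht₂, hsub₂⟩ := hv'
    obtain ⟨V, hV1, hV2, n, hn, hbig⟩ :=
      key_construction U.1 U.2 (I₁ ∪ I₂) (hI₁fin.union hI₂fin) x₀ hx₀ N
    have hVF : V ∈ F N := by
      apply hsub
      show _ ∈ t
      apply huv
      constructor
      · apply hsub₁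
        intro z hz
        have : V.1 z = U.1 z := hV1 z (Set.mem_union_left _ hz)
        show V.1 z ∈ t₁ z
        rw [this]
        exact mem_of_mem_nhds (ht₁ z)
      · apply hsub₂
        intro z hz
        have : ContinuousLinearMap.adjoint V.1 z = ContinuousLinearMap.adjoint U.1 z :=
          hV2 z (Set.mem_union_right _ hz)
        show ContinuousLinearMap.adjoint V.1 z ∈ t₂ z
        rw [this]
        exact mem_of_mem_nhds (ht₂ z)
    have := hVF n hn
    linarith
  have hmeag : ∀ N, IsMeagre (F N) :=
    fun N => residual_of_dense_open (hFclosed N).isOpen_compl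
      (interior_eq_empty_iff_dense_compl.mp (hFint N))
  have hsub : {U : 𝕌 | ∀ x y : H,
      Tendsto (fun n : ℕ => (inner ℂ ((U.1 ^ n) x) y : ℂ)) atTop (𝓝 0)} ⊆ ⋃ N, F N := by
    intro U hU
    have h1 := hU x₀ x₀
    have h2 : ∀ᶠ n in atTop, ‖(⟪(U.1 ^ n) x₀, x₀⟫_ℂ)‖ ≤ 1/2 := by
      have h3 := Metric.tendsto_nhds.mp h1 (1/2) (by norm_num)
      filter_upwards [h3] with k hk
      rw [dist_zero_right] at hk
      exact le_of_lt hk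
    rw [eventually_atTop] at h2
    obtain ⟨N, hN⟩ := h2
    exact Set.mem_iUnion.mpr ⟨N, fun k hk => hN k hk⟩
  exact (isMeagre_iUnion hmeag).mono hsub
end

section
/- Let H be a separable infinite-dimensional Hilbert space and let I denote the set of all isometries on H with the strong operator topology. Then the set of periodic isometries (isometries V with V^n = Id for some n ≥ 1; such V are automatically unitary) is dense in I. -/
open scoped InnerProductSpace
lemma aux_ext {E : Type*} [NormedAddCommGroup E] [InnerProductSpace ℂ E]
    (V : E →ₗ[ℂ] E) (hV : ∀ a b : E, ⟪V a, V b⟫_ℂ = ⟪a, b⟫_ℂ)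
    (F M : Submodule ℂ E) [FiniteDimensional ℂ M] (hFM : F ≤ M)
    (hVFM : ∀ z ∈ F, V z ∈ M) :
    ∃ u : M ≃ₗᵢ[ℂ] M, ∀ z (hz : z ∈ F), (u ⟨z, hFM hz⟩ : E) = V z := by
  haveI : FiniteDimensional ℂ F :=
    FiniteDimensional.of_injective (Submodule.inclusion hFM) (Submodule.inclusion_injective hFM)
  set d := Module.finrank ℂ F with hd
  set r := Module.finrank ℂ M with hr
  have hdr : d ≤ r :=
    LinearMap.finrank_le_finrank_of_injective (f := Submodule.inclusion hFM)
      (Submodule.inclusion_injective hFM)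
  set e := stdOrthonormalBasis ℂ F with he
  set eM : Fin d → M := fun j => ⟨(e j : E), hFM (e j).2⟩ with heMdef
  set g : Fin d → M := fun j => ⟨V (e j), hVFM _ (e j).2⟩ with hgdef
  have heM : Orthonormal ℂ eM := by
    rw [orthonormal_iff_ite]
    have h0 := e.orthonormal
    rw [orthonormal_iff_ite] at h0
    intro i j
    simpa [heMdef, Submodule.coe_inner] using h0 i j
  have hg : Orthonormal ℂ g := by
    rw [orthonormal_iff_ite]
    have h0 := e.orthonormal
    rw [orthonormal_iff_ite] at h0
    intro i j
    have := hV (e i) (e j)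
    simpa [hgdef, Submodule.coe_inner, this] using h0 i j
  set s : Set (Fin r) := {j | (j : ℕ) < d} with hs
  have hinj : Function.Injective (fun j : s => (⟨(j : Fin r), j.2⟩ : Fin d)) := by
    intro a b hab
    have h2 := congrArg Fin.val hab
    exact Subtype.ext (Fin.ext h2)
  have hcard : Module.finrank ℂ M = Fintype.card (Fin r) := by simp [hr]
  have hvb : Orthonormal ℂ (s.restrict (fun j : Fin r =>
      if h : (j : ℕ) < d then eM ⟨j, h⟩ else 0)) := by
    have : s.restrict (fun j : Fin r => if h : (j : ℕ) < d then eM ⟨j, h⟩ else 0)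
        = eM ∘ (fun j : s => (⟨(j : Fin r), j.2⟩ : Fin d)) := by
      funext j
      exact dif_pos j.2
    rw [this]
    exact heM.comp _ hinj
  have hvc : Orthonormal ℂ (s.restrict (fun j : Fin r =>
      if h : (j : ℕ) < d then g ⟨j, h⟩ else 0)) := by
    have : s.restrict (fun j : Fin r => if h : (j : ℕ) < d then g ⟨j, h⟩ else 0)
        = g ∘ (fun j : s => (⟨(j : Fin r), j.2⟩ : Fin d)) := by
      funext j
      exact dif_pos j.2
    rw [this]
    exact hg.comp _ hinj
  obtain ⟨b, hb⟩ := hvb.exists_orthonormalBasis_extension_of_card_eq hcard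
  obtain ⟨c, hc⟩ := hvc.exists_orthonormalBasis_extension_of_card_eq hcard
  set u : M ≃ₗᵢ[ℂ] M := b.repr.trans c.repr.symm with hu
  have hu_basis : ∀ j : Fin d, u (eM j) = g j := by
    intro j
    have hjs : ((⟨(j : ℕ), lt_of_lt_of_le j.2 hdr⟩ : Fin r)) ∈ s := j.2
    have hbj : b ⟨(j : ℕ), lt_of_lt_of_le j.2 hdr⟩ = eM j := by
      rw [hb _ hjs]
      simp [dif_pos (show ((⟨(j : ℕ), lt_of_lt_of_le j.2 hdr⟩ : Fin r) : ℕ) < d from j.2)]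
    have hcj : c ⟨(j : ℕ), lt_of_lt_of_le j.2 hdr⟩ = g j := by
      rw [hc _ hjs]
      simp [dif_pos (show ((⟨(j : ℕ), lt_of_lt_of_le j.2 hdr⟩ : Fin r) : ℕ) < d from j.2)]
    calc u (eM j) = c.repr.symm (b.repr (b ⟨(j : ℕ), lt_of_lt_of_le j.2 hdr⟩)) := by
          rw [hbj]; rfl
      _ = c ⟨(j : ℕ), lt_of_lt_of_le j.2 hdr⟩ := by
          rw [b.repr_self, c.repr_symm_single]
      _ = g j := hcj
  set L1 : F →ₗ[ℂ] M := (u.toLinearEquiv : M →ₗ[ℂ] M) ∘ₗ Submodule.inclusion hFM with hL1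
  set L2 : F →ₗ[ℂ] M := LinearMap.codRestrict M (V ∘ₗ F.subtype) (fun z => hVFM _ z.2) with hL2
  have hL : L1 = L2 := by
    apply e.toBasis.ext
    intro j
    have h1 : Submodule.inclusion hFM (e.toBasis j) = eM j := by
      rw [e.coe_toBasis]
      exact Subtype.ext rfl
    have h2 : L2 (e.toBasis j) = g j := by
      rw [e.coe_toBasis]
      exact Subtype.ext rfl
    rw [hL1, LinearMap.comp_apply, h1, h2]
    exact hu_basis j
  refine ⟨u, fun z hz => ?_⟩
  have := congrArg (fun L : F →ₗ[ℂ] M => ((L ⟨z, hz⟩ : M) : E)) hL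
  exact this

open Complex in
lemma aux_root (δ : ℝ) (hδ : 0 < δ) :
    ∃ n : ℕ, 1 ≤ n ∧ ∀ z : ℂ, ‖z‖ = 1 →
      ∃ w : ℂ, w ^ n = 1 ∧ ‖z - w‖ ≤ δ ∧ ‖w‖ = 1 := by
  obtain ⟨n, hn⟩ := exists_nat_ge (max 7 (4 * Real.pi / δ))
  have hn7 : (7 : ℝ) ≤ n := le_trans (le_max_left _ _) hn
  have hn1 : 1 ≤ n := by
    have : (1 : ℝ) ≤ (n : ℝ) := by linarith
    exact_mod_cast this
  have hnpos : (0 : ℝ) < n := by linarith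
  have hπ : (0 : ℝ) < Real.pi := Real.pi_pos
  have h4π : 4 * Real.pi / δ ≤ n := le_trans (le_max_right _ _) hn
  have hkey : 4 * Real.pi / n ≤ δ := by
    rw [div_le_iff₀ hnpos]
    rw [div_le_iff₀ hδ] at h4π
    nlinarith
  have hsmall : 2 * Real.pi / n ≤ 1 := by
    rw [div_le_one hnpos]
    nlinarith [Real.pi_lt_d2]
  refine ⟨n, hn1, fun z hz => ?_⟩
  set θ := z.arg with hθ
  set t : ℝ := (n : ℝ) * θ / (2 * Real.pi) with ht
  set k : ℤ := ⌊t⌋ with hk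
  set φ : ℝ := 2 * Real.pi * k / n with hφ
  have hθt : θ = 2 * Real.pi * t / n := by
    rw [ht]; field_simp
  have h1 : (k : ℝ) ≤ t := Int.floor_le t
  have h2 : t < k + 1 := Int.lt_floor_add_one t
  have hbound1 : 0 ≤ θ - φ := by
    rw [hθt, hφ, div_sub_div_same]
    apply div_nonneg _ hnpos.le
    nlinarith
  have hbound2 : θ - φ ≤ 2 * Real.pi / n := by
    rw [hθt, hφ]
    rw [div_sub_div_same, div_le_div_iff₀ hnpos hnpos]
    have h3 : t - k ≤ 1 := by linarith
    nlinarith [mul_le_mul_of_nonneg_right (mul_le_mul_of_nonneg_left h3 (by positivity : (0:ℝ) ≤ 2*Real.pi)) hnpos.le]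
  refine ⟨Complex.exp (φ * Complex.I), ?_, ?_, ?_⟩
  · rw [← Complex.exp_nat_mul]
    have : (n : ℂ) * (φ * Complex.I) = (k : ℂ) * (2 * Real.pi * Complex.I) := by
      push_cast [hφ]
      have : (n : ℂ) ≠ 0 := by exact_mod_cast (ne_of_gt (show (0:ℕ) < n by omega))
      field_simp
    rw [this, Complex.exp_int_mul_two_pi_mul_I]
  · have hzexp : z = Complex.exp (θ * Complex.I) := by
      conv_lhs => rw [← Complex.norm_mul_exp_arg_mul_I z]
      rw [show ‖z‖ = 1 from hz]
      simp [hθ]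
    have hdiff : z - Complex.exp (φ * Complex.I)
        = Complex.exp (φ * Complex.I) * (Complex.exp ((θ - φ : ℝ) * Complex.I) - 1) := by
      rw [hzexp, mul_sub, mul_one, ← Complex.exp_add]
      push_cast
      ring_nf
    rw [hdiff, norm_mul]
    have habs1 : ‖Complex.exp (φ * Complex.I)‖ = 1 := by
      simp [Complex.norm_exp_ofReal_mul_I φ]
    rw [habs1, one_mul]
    have habsarg : ‖((θ - φ : ℝ) : ℂ) * Complex.I‖ = θ - φ := by
      rw [norm_mul, Complex.norm_I, mul_one, Complex.norm_real, Real.norm_eq_abs, _root_.abs_of_nonneg hbound1]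
    have hle1 : ‖((θ - φ : ℝ) : ℂ) * Complex.I‖ ≤ 1 := by
      rw [habsarg]; linarith
    have hb := Complex.norm_exp_sub_one_le hle1
    rw [habsarg] at hb
    calc ‖Complex.exp ((θ - φ : ℝ) * Complex.I) - 1‖ ≤ 2 * (θ - φ) := hb
      _ ≤ 2 * (2 * Real.pi / n) := by linarith
      _ ≤ δ := by rw [show 2 * (2 * Real.pi / n) = 4 * Real.pi / n by ring]; exact hkey
  · simp [Complex.norm_exp_ofReal_mul_I φ]


set_option maxHeartbeats 1000000 in
lemma aux_periodic {E : Type*} [NormedAddCommGroup E] [InnerProductSpace ℂ E]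
    [FiniteDimensional ℂ E] [Nontrivial E] (u' : E →L[ℂ] E)
    (hu1 : star u' * u' = 1) (hu2 : u' * star u' = 1) (n : ℕ) {δ : ℝ} (hδ : 0 < δ)
    (hroot : ∀ z : ℂ, ‖z‖ = 1 → ∃ w : ℂ, w ^ n = 1 ∧ ‖z - w‖ ≤ δ ∧ ‖w‖ = 1) :
    ∃ w : E →L[ℂ] E, (∀ z, ‖w z‖ = ‖z‖) ∧ w ^ n = 1 ∧ ‖u' - w‖ ≤ δ := by
  haveI hnormal : IsStarNormal u' := ⟨by rw [Commute, SemiconjBy, hu1, hu2]⟩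
  have hunit : u' ∈ unitary (E →L[ℂ] E) := ⟨hu1, hu2⟩
  haveI : Nontrivial (E →L[ℂ] E) := by
    refine ⟨1, 0, fun h => ?_⟩
    obtain ⟨z, hz⟩ := exists_ne (0 : E)
    exact hz (by simpa using ContinuousLinearMap.ext_iff.mp h z)
  set alg : (E →L[ℂ] E) →ₐ[ℂ] (E →ₗ[ℂ] E) :=
    { toFun := fun f => (f : E →ₗ[ℂ] E)
      map_one' := rfl
      map_mul' := fun a b => rfl
      map_zero' := rfl
      map_add' := fun a b => rfl
      commutes' := fun c => rfl } with halg
  set q : Polynomial ℂ := (u' : E →ₗ[ℂ] E).charpoly with hq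
  have hq0 : Polynomial.aeval u' q = 0 := by
    apply ContinuousLinearMap.coe_injective
    show alg (Polynomial.aeval u' q) = ((0 : E →L[ℂ] E) : E →ₗ[ℂ] E)
    rw [← Polynomial.aeval_algHom_apply alg u' q]
    show Polynomial.aeval (u' : E →ₗ[ℂ] E) q = _
    rw [LinearMap.aeval_self_charpoly]
    rfl
  have hspecfin : (spectrum ℂ u').Finite := by
    apply Set.Finite.subset (Polynomial.finite_setOf_isRoot
      ((u' : E →ₗ[ℂ] E).charpoly_monic.ne_zero))
    intro μ hμ
    have h1 : Polynomial.eval μ q ∈ spectrum ℂ (Polynomial.aeval u' q) :=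
      spectrum.subset_polynomial_aeval u' q ⟨μ, hμ, rfl⟩
    rw [hq0, spectrum.zero_eq] at h1
    simpa using h1
  set f : ℂ → ℂ := fun z => if h : ‖z‖ = 1 then (hroot z h).choose else 1 with hf
  have hfprop : ∀ z : ℂ, ‖z‖ = 1 → f z ^ n = 1 ∧ ‖z - f z‖ ≤ δ ∧ ‖f z‖ = 1 := by
    intro z h
    have hfz : f z = (hroot z h).choose := dif_pos h
    rw [hfz]
    exact (hroot z h).choose_spec
  have hcirc : ∀ z ∈ spectrum ℂ u', ‖z‖ = 1 := by
    intro z hzs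
    have := spectrum.subset_circle_of_unitary hunit hzs
    simpa [Metric.mem_sphere, dist_zero_right] using this
  have hfc : ContinuousOn f (spectrum ℂ u') := by
    haveI := hspecfin.to_subtype
    rw [continuousOn_iff_continuous_restrict]
    exact continuous_of_discreteTopology
  set w : E →L[ℂ] E := cfc f u' with hw
  have hfcstar : ContinuousOn (fun z => star (f z)) (spectrum ℂ u') := hfc.star
  have hw1 : star w * w = 1 := by
    rw [hw, ← cfc_star f u', ← cfc_mul _ _ u' hfcstar hfc]
    have heq : (spectrum ℂ u').EqOn (fun z => star (f z) * f z) 1 := by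
      intro z hzs
      have h1 := (hfprop z (hcirc z hzs)).2.2
      simp only [Pi.one_apply, Complex.star_def, mul_comm (starRingEnd ℂ (f z)) (f z),
        Complex.mul_conj]
      norm_cast
      rw [Complex.normSq_eq_norm_sq]
      rw [show ‖f z‖ = 1 from h1]
      norm_num
    rw [cfc_congr heq]
    exact cfc_one ℂ u'
  have hwn : w ^ n = 1 := by
    rw [hw, ← cfc_pow f n u' hfc]
    have heq : (spectrum ℂ u').EqOn (fun z => f z ^ n) 1 := fun z hzs =>
      (hfprop z (hcirc z hzs)).1
    rw [cfc_congr heq]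
    exact cfc_one ℂ u'
  have hdiffnorm : ‖u' - w‖ ≤ δ := by
    have h1 : u' - w = cfc (fun z => z - f z) u' := by
      rw [hw, cfc_sub (fun z : ℂ => z) f u' continuousOn_id hfc, cfc_id' ℂ u']
    rw [h1]
    exact norm_cfc_le hδ.le fun z hzs => (hfprop z (hcirc z hzs)).2.1
  have hwnorm : ∀ z : E, ‖w z‖ = ‖z‖ := by
    intro z
    have h2 : ContinuousLinearMap.adjoint w (w z) = z := by
      have h3 := ContinuousLinearMap.ext_iff.mp hw1 z
      rw [ContinuousLinearMap.mul_apply, ContinuousLinearMap.star_eq_adjoint,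
        ContinuousLinearMap.one_apply] at h3
      exact h3
    have h1 : ⟪w z, w z⟫_ℂ = ⟪z, z⟫_ℂ :=
      calc ⟪w z, w z⟫_ℂ = ⟪ContinuousLinearMap.adjoint w (w z), z⟫_ℂ :=
            (ContinuousLinearMap.adjoint_inner_left w z (w z)).symm
        _ = ⟪z, z⟫_ℂ := by rw [h2]
    have h4 : ‖w z‖ ^ 2 = ‖z‖ ^ 2 := by
      rw [← inner_self_eq_norm_sq (𝕜 := ℂ), ← inner_self_eq_norm_sq (𝕜 := ℂ), h1]
    have := congrArg Real.sqrt h4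
    simpa [Real.sqrt_sq, norm_nonneg] using this
  exact ⟨w, hwnorm, hwn, hdiffnorm⟩


set_option maxHeartbeats 1000000 in
/-- On a separable infinite-dimensional Hilbert space, the periodic isometries
(which are automatically unitary) are dense in the set of all isometries with respect to
the strong operator topology. -/
theorem stmt13 {H : Type*} [NormedAddCommGroup H] [InnerProductSpace ℂ H] [CompleteSpace H]
    [TopologicalSpace.SeparableSpace H] (hinf : ¬ FiniteDimensional ℂ H) :
    ∀ V : H →L[ℂ] H, (∀ x, ‖V x‖ = ‖x‖) → ∀ ε > (0 : ℝ), ∀ (m : ℕ) (x : Fin m → H),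
      ∃ W : H →L[ℂ] H, (∀ y, ‖W y‖ = ‖y‖) ∧ (∃ n : ℕ, 1 ≤ n ∧ W ^ n = 1) ∧
        ∀ i, ‖V (x i) - W (x i)‖ < ε := by
  intro V hV ε hε m x
  have hVinner : ∀ a b : H, ⟪V a, V b⟫_ℂ = ⟪a, b⟫_ℂ := fun a b =>
    LinearIsometry.inner_map_map ⟨(V : H →ₗ[ℂ] H), hV⟩ a b
  haveI : Nontrivial H := by
    by_contra h
    rw [not_nontrivial_iff_subsingleton] at h
    exact hinf inferInstance
  obtain ⟨v, hv⟩ := exists_ne (0 : H)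
  obtain ⟨F, hxF, hvF, hFfin⟩ :
      ∃ F : Submodule ℂ H, (∀ i, x i ∈ F) ∧ v ∈ F ∧ FiniteDimensional ℂ F := by
    refine ⟨Submodule.span ℂ (Set.range (Fin.cons v x : Fin (m + 1) → H)), ?_, ?_, ?_⟩
    · intro i
      exact Submodule.subset_span ⟨i.succ, by simp⟩
    · exact Submodule.subset_span ⟨0, by simp⟩
    · exact FiniteDimensional.span_of_finite ℂ (Set.finite_range _)
  haveI : FiniteDimensional ℂ F := hFfin
  obtain ⟨M, hFM, hVFM, hMfin⟩ :
      ∃ M : Submodule ℂ H, F ≤ M ∧ (∀ z ∈ F, (V : H →ₗ[ℂ] H) z ∈ M) ∧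
        FiniteDimensional ℂ M := by
    refine ⟨F ⊔ Submodule.map (V : H →ₗ[ℂ] H) F, le_sup_left, ?_, ?_⟩
    · intro z hz
      exact (le_sup_right : Submodule.map (V : H →ₗ[ℂ] H) F ≤ _)
        (Submodule.mem_map_of_mem hz)
    · haveI : FiniteDimensional ℂ (Submodule.map (V : H →ₗ[ℂ] H) F) :=
        Module.Finite.map F (V : H →ₗ[ℂ] H)
      exact Submodule.finiteDimensional_sup _ _
  haveI : FiniteDimensional ℂ M := hMfin
  obtain ⟨u, hu⟩ := aux_ext (V : H →ₗ[ℂ] H) hVinner F M hFM hVFM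
  haveI : Nontrivial M := by
    refine ⟨⟨v, hFM hvF⟩, 0, ?_⟩
    intro h
    exact hv (by simpa using congrArg Subtype.val h)
  obtain ⟨u', hu'def⟩ : ∃ T : M →L[ℂ] M, ∀ z, T z = u z :=
    ⟨u.toLinearIsometry.toContinuousLinearMap, fun z => rfl⟩
  obtain ⟨s', hs'def⟩ : ∃ T : M →L[ℂ] M, ∀ z, T z = u.symm z :=
    ⟨u.symm.toLinearIsometry.toContinuousLinearMap, fun z => rfl⟩
  -- u' is unitary
  have hadj : s' = ContinuousLinearMap.adjoint u' := by
    rw [ContinuousLinearMap.eq_adjoint_iff]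
    intro a b
    rw [hs'def, hu'def]
    calc ⟪u.symm a, b⟫_ℂ
        = ⟪u (u.symm a), u b⟫_ℂ := (u.inner_map_map _ _).symm
      _ = ⟪a, u b⟫_ℂ := by rw [u.apply_symm_apply]
  have hu1 : star u' * u' = 1 := by
    rw [ContinuousLinearMap.star_eq_adjoint, ← hadj]
    refine ContinuousLinearMap.ext fun z => ?_
    rw [ContinuousLinearMap.mul_apply, hu'def, hs'def, ContinuousLinearMap.one_apply]
    exact u.symm_apply_apply z
  have hu2 : u' * star u' = 1 := by
    rw [ContinuousLinearMap.star_eq_adjoint, ← hadj]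
    refine ContinuousLinearMap.ext fun z => ?_
    rw [ContinuousLinearMap.mul_apply, hu'def, hs'def, ContinuousLinearMap.one_apply]
    exact u.apply_symm_apply z
  set R : ℝ := 1 + ∑ i, ‖x i‖ with hR
  have hRpos : 0 < R := by
    have : 0 ≤ ∑ i, ‖x i‖ := Finset.sum_nonneg fun i _ => norm_nonneg _
    rw [hR]; linarith
  set δ : ℝ := ε / R with hδdef
  have hδ : 0 < δ := div_pos hε hRpos
  obtain ⟨n, hn1, hroot⟩ := aux_root δ hδ
  obtain ⟨w, hwnorm, hwn, hdiffnorm⟩ := aux_periodic u' hu1 hu2 n hδ hroot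
  -- extend w to H by identity on Mᗮ
  set P := M.orthogonalProjectionOnto with hP
  set W : H →L[ℂ] H := M.subtypeL.comp (w.comp P) +
    (ContinuousLinearMap.id ℂ H - M.subtypeL.comp P) with hWdef
  have hWapply : ∀ y : H, W y = (w (P y) : H) + (y - (P y : H)) := fun y => rfl
  have hPz : ∀ z : M, P (z : H) = z := fun z => Submodule.orthogonalProjectionOnto_mem_subspace_eq_self z
  have hPperp : ∀ y : H, y - (P y : H) ∈ Mᗮ := fun y => Submodule.sub_starProjection_mem_orthogonal (K := M) y
  have hPkill : ∀ y ∈ Mᗮ, P y = 0 := fun y hy =>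
    Submodule.orthogonalProjectionOnto_apply_of_mem_orthogonal hy
  have horth : ∀ (a : M) (y : H), ⟪(a : H), y - (P y : H)⟫_ℂ = 0 := fun a y =>
    (Submodule.mem_orthogonal M _).mp (hPperp y) a a.2
  have hWnorm : ∀ y : H, ‖W y‖ = ‖y‖ := by
    intro y
    have e1 : ‖W y‖ ^ 2 = ‖(w (P y) : H)‖ ^ 2 + ‖y - (P y : H)‖ ^ 2 := by
      rw [hWapply, norm_add_sq (𝕜 := ℂ), horth (w (P y)) y]
      simp
    have e2 : ‖y‖ ^ 2 = ‖((P y) : H)‖ ^ 2 + ‖y - (P y : H)‖ ^ 2 := by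
      conv_lhs => rw [show y = ((P y : H)) + (y - (P y : H)) by abel]
      rw [norm_add_sq (𝕜 := ℂ), horth (P y) y]
      simp
    have e3 : ‖(w (P y) : H)‖ = ‖((P y) : H)‖ := hwnorm (P y)
    have h4 : ‖W y‖ ^ 2 = ‖y‖ ^ 2 := by rw [e1, e3, ← e2]
    have := congrArg Real.sqrt h4
    simpa [Real.sqrt_sq, norm_nonneg] using this
  have hWpow : ∀ (k : ℕ) (y : H), (W ^ k) y = ((w ^ k) (P y) : H) + (y - (P y : H)) := by
    intro k
    induction k with
    | zero => intro y; simp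
    | succ k ih =>
      intro y
      rw [pow_succ, ContinuousLinearMap.mul_apply, hWapply y, ih]
      have hPW : P (((w (P y)) : H) + (y - (P y : H))) = w (P y) := by
        rw [map_add, hPz, hPkill _ (hPperp y), add_zero]
      rw [hPW]
      have hcomm : (w ^ k) (w (P y)) = (w ^ (k + 1)) (P y) := by
        rw [pow_succ, ContinuousLinearMap.mul_apply]
      rw [hcomm]
      abel
  have hWn : W ^ n = 1 := by
    refine ContinuousLinearMap.ext fun y => ?_
    rw [ContinuousLinearMap.one_apply, hWpow n y, hwn]
    simp
  refine ⟨W, hWnorm, ⟨n, hn1, hWn⟩, ?_⟩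
  intro i
  have hxM : x i ∈ M := hFM (hxF i)
  have hPx : P (x i) = ⟨x i, hxM⟩ := hPz ⟨x i, hxM⟩
  have hWx : W (x i) = (w ⟨x i, hxM⟩ : H) := by
    rw [hWapply, hPx]
    simp
  have hVx : V (x i) = (u' ⟨x i, hxM⟩ : H) := by
    rw [hu'def]
    exact (hu (x i) (hxF i)).symm
  rw [hVx, hWx]
  have hsub : (u' ⟨x i, hxM⟩ : H) - (w ⟨x i, hxM⟩ : H) = (((u' - w) ⟨x i, hxM⟩ : M) : H) := by
    rw [ContinuousLinearMap.sub_apply]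
    simp
  rw [hsub]
  have h2 : ‖((⟨x i, hxM⟩ : M) : H)‖ = ‖x i‖ := rfl
  have hle : ‖(((u' - w) ⟨x i, hxM⟩ : M) : H)‖ ≤ δ * ‖x i‖ := by
    have h1 : ‖(u' - w) (⟨x i, hxM⟩ : M)‖ ≤ ‖u' - w‖ * ‖(⟨x i, hxM⟩ : M)‖ :=
      (u' - w).le_opNorm _
    calc ‖(((u' - w) ⟨x i, hxM⟩ : M) : H)‖ = ‖(u' - w) (⟨x i, hxM⟩ : M)‖ := rfl
      _ ≤ ‖u' - w‖ * ‖(⟨x i, hxM⟩ : M)‖ := h1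
      _ ≤ δ * ‖(⟨x i, hxM⟩ : M)‖ :=
          mul_le_mul_of_nonneg_right hdiffnorm (norm_nonneg _)
      _ = δ * ‖x i‖ := by rw [show ‖(⟨x i, hxM⟩ : M)‖ = ‖x i‖ from rfl]
  have hxiR : ‖x i‖ ≤ R - 1 := by
    have h3 : ‖x i‖ ≤ ∑ j, ‖x j‖ :=
      Finset.single_le_sum (fun j _ => norm_nonneg (x j)) (Finset.mem_univ _)
    rw [hR]
    linarith
  calc ‖(((u' - w) ⟨x i, hxM⟩ : M) : H)‖ ≤ δ * ‖x i‖ := hle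
    _ ≤ δ * (R - 1) := mul_le_mul_of_nonneg_left hxiR hδ.le
    _ < δ * R := mul_lt_mul_of_pos_left (by linarith) hδ
    _ = ε := by rw [hδdef]; field_simp
end

section
/- Let H be a separable infinite-dimensional Hilbert space and let I denote the set of all isometries on H with the strong operator topology. Then the set of almost weakly stable isometries (isometries without eigenvalues of modulus 1) is dense in I. -/
open Submodule Module Finset Metric
open scoped ComplexConjugate ENNReal

local notation "⟪" x ", " y "⟫" => @inner ℂ _ _ x y

set_option maxHeartbeats 2000000

/-- On a separable infinite-dimensional Hilbert space, the almost weakly stable isometries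
(isometries without eigenvalues of modulus one) are dense in the set of all isometries
with respect to the strong operator topology. -/
theorem stmt14 {H : Type*} [NormedAddCommGroup H] [InnerProductSpace ℂ H] [CompleteSpace H]
    [TopologicalSpace.SeparableSpace H] (hinf : ¬ FiniteDimensional ℂ H) :
    ∀ V : H →L[ℂ] H, (∀ x, ‖V x‖ = ‖x‖) → ∀ ε > (0 : ℝ), ∀ (m : ℕ) (x : Fin m → H),
      ∃ W : H →L[ℂ] H, (∀ y, ‖W y‖ = ‖y‖) ∧
        (∀ c : ℂ, ‖c‖ = 1 → ∀ y : H, y ≠ 0 → W y ≠ c • y) ∧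
        ∀ i, ‖V (x i) - W (x i)‖ < ε := by
  intro V hV ε hε m x
  classical
  -- H is nontrivial
  have hnt : Nontrivial H := by
    by_contra h
    rw [not_nontrivial_iff_subsingleton] at h
    exact hinf inferInstance
  obtain ⟨w, hw⟩ := exists_ne (0 : H)
  -- numerical setup
  set M : ℝ := ∑ i, ‖x i‖ with hM
  have hM0 : 0 ≤ M := Finset.sum_nonneg fun i _ => norm_nonneg _
  have hxM : ∀ i, ‖x i‖ ≤ M := fun i =>
    Finset.single_le_sum (f := fun i => ‖x i‖) (fun i _ => norm_nonneg _) (Finset.mem_univ i)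
  set δ : ℝ := min (1/2) (ε / (2*M + 2)) with hδ
  have hδ0 : 0 < δ := lt_min (by norm_num) (div_pos hε (by linarith))
  have hδhalf : δ ≤ 1/2 := min_le_left _ _
  have hδε : δ ≤ ε / (2*M + 2) := min_le_right _ _
  set r : ℝ := Real.sqrt (1 - δ^2) with hr
  have hr2 : r^2 = 1 - δ^2 := Real.sq_sqrt (by nlinarith)
  have hr0 : 0 ≤ r := Real.sqrt_nonneg _
  have hr1 : r < 1 := by nlinarith
  have h1r : 1 - r ≤ δ := by nlinarith
  -- the finite-dimensional subspace G
  set Gset : Set H := insert w (Set.range x ∪ Set.range (fun i => V (x i))) with hGset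
  have hGfin : Gset.Finite := by
    apply Set.Finite.insert
    exact (Set.finite_range x).union (Set.finite_range _)
  set G : Submodule ℂ H := span ℂ Gset with hGdef
  haveI hGfd : FiniteDimensional ℂ G := FiniteDimensional.span_of_finite ℂ hGfin
  haveI : CompleteSpace G := FiniteDimensional.complete ℂ G
  set d : ℕ := finrank ℂ G with hd
  have hwG : w ∈ G := subset_span (Set.mem_insert _ _)
  have hdpos : 0 < d := by
    rw [hd]
    rw [finrank_pos_iff]
    exact ⟨⟨⟨w, hwG⟩, 0, by simp [hw]⟩⟩
  have hxG : ∀ i, x i ∈ G := fun i =>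
    subset_span (Set.mem_insert_of_mem _ (Or.inl ⟨i, rfl⟩))
  have hVxG : ∀ i, V (x i) ∈ G := fun i =>
    subset_span (Set.mem_insert_of_mem _ (Or.inr ⟨i, rfl⟩))
  -- the subspace F spanned by the x i, and the partial isometry V' on G extending V on F
  set F : Submodule ℂ H := span ℂ (Set.range x) with hF
  have hxF : ∀ i, x i ∈ F := fun i => subset_span ⟨i, rfl⟩
  have hVF : ∀ z ∈ F, V z ∈ G := by
    intro z hz
    induction hz using Submodule.span_induction with
    | mem z hz => obtain ⟨i, rfl⟩ := hz; exact hVxG i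
    | zero => simp
    | add a b _ _ ha hb => rw [map_add]; exact G.add_mem ha hb
    | smul c a _ ha => rw [map_smul]; exact G.smul_mem c ha
  set S : Submodule ℂ G := F.comap G.subtype with hS
  let Lmap : S →ₗ[ℂ] G :=
    { toFun := fun s => ⟨V (s : G), hVF _ s.2⟩
      map_add' := by intro a b; ext; simp
      map_smul' := by intro c a; ext; simp }
  have hLnorm : ∀ s : S, ‖Lmap s‖ = ‖s‖ := by
    intro s
    show ‖(⟨V ((s : G) : H), hVF _ s.2⟩ : G)‖ = ‖s‖
    have h1 : ‖(⟨V ((s : G) : H), hVF _ s.2⟩ : G)‖ = ‖V ((s : G) : H)‖ := rfl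
    rw [h1, hV]
    rfl
  let L : S →ₗᵢ[ℂ] G := ⟨Lmap, hLnorm⟩
  let V' : G →ₗᵢ[ℂ] G := L.extend
  have hV'F : ∀ (z : H) (hzG : z ∈ G) (_ : z ∈ F), ((V' ⟨z, hzG⟩ : G) : H) = V z := by
    intro z hzG hzF
    have hmem : (⟨z, hzG⟩ : G) ∈ S := by
      simp only [hS, Submodule.mem_comap, Submodule.coe_subtype]
      exact hzF
    have h := L.extend_apply ⟨⟨z, hzG⟩, hmem⟩
    have h2 := congrArg (Subtype.val) h
    exact h2
  -- orthonormal basis of G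
  set u : OrthonormalBasis (Fin d) ℂ G := stdOrthonormalBasis ℂ G with hu
  -- Hilbert basis of Gᗮ indexed by ℕ
  haveI : SecondCountableTopology H := UniformSpace.secondCountable_of_separable H
  obtain ⟨wset, b0, hb0⟩ := exists_hilbertBasis ℂ (↥Gᗮ)
  have honw : Orthonormal ℂ ((↑) : wset → ↥Gᗮ) := by rw [← hb0]; exact b0.orthonormal
  have hcount : wset.Countable := by
    have hdisj : wset.PairwiseDisjoint (fun v : ↥Gᗮ => Metric.ball v (1/2)) := by
      intro a ha b hb hab
      have hne : (⟨a, ha⟩ : wset) ≠ ⟨b, hb⟩ := by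
        simp only [ne_eq, Subtype.mk.injEq]; exact hab
      have hiz : ⟪((⟨a, ha⟩ : wset) : ↥Gᗮ), ((⟨b, hb⟩ : wset) : ↥Gᗮ)⟫ = 0 := honw.2 hne
      have hna : ‖((⟨a, ha⟩ : wset) : ↥Gᗮ)‖ = 1 := honw.1 ⟨a, ha⟩
      have hnb : ‖((⟨b, hb⟩ : wset) : ↥Gᗮ)‖ = 1 := honw.1 ⟨b, hb⟩
      simp only [Subtype.coe_mk] at hiz hna hnb
      have hsq : ‖a - b‖^2 = 2 := by
        rw [@norm_sub_sq ℂ, hiz, hna, hnb]; norm_num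
      have hdist : (1 : ℝ) ≤ dist a b := by
        rw [dist_eq_norm]
        nlinarith [norm_nonneg (a - b)]
      exact Metric.ball_disjoint_ball (by linarith)
    exact hdisj.countable_of_isOpen (fun i _ => Metric.isOpen_ball)
      (fun i _ => ⟨i, Metric.mem_ball_self (by norm_num)⟩)
  have hGperp_fd : ¬ FiniteDimensional ℂ (↥Gᗮ) := by
    intro hfd
    apply hinf
    have h1 : FiniteDimensional ℂ ↥(G ⊔ Gᗮ) := inferInstance
    rw [Submodule.sup_orthogonal_of_hasOrthogonalProjection] at h1
    exact Module.Finite.equiv (Submodule.topEquiv : (⊤ : Submodule ℂ H) ≃ₗ[ℂ] H)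
  have hwsetinf : wset.Infinite := by
    by_contra hfin
    rw [Set.not_infinite] at hfin
    haveI := hfin.fintype
    exact hGperp_fd (Module.Finite.of_basis b0.toOrthonormalBasis.toBasis)
  haveI := hcount.to_subtype
  haveI := hwsetinf.to_subtype
  obtain ⟨denu⟩ := nonempty_denumerable (↥wset)
  let q : ↥wset ≃ ℕ := Denumerable.eqv (↥wset)
  set E : ℕ → H := fun n => ((b0 (q.symm n) : ↥Gᗮ) : H) with hE
  have hEmem : ∀ n, E n ∈ Gᗮ := fun n => (b0 (q.symm n)).2
  have hEinner : ∀ a b : ℕ, ⟪E a, E b⟫ = if a = b then 1 else 0 := by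
    intro a b
    have h1 : ⟪E a, E b⟫ = ⟪b0 (q.symm a), b0 (q.symm b)⟫ := rfl
    rw [h1, orthonormal_iff_ite.mp b0.orthonormal]
    simp [q.symm.injective.eq_iff]
  -- combined Hilbert basis of H
  set β : Fin d ⊕ ℕ → H := Sum.elim (fun j => ((u j : G) : H)) E with hβ
  have huinner : ∀ j j' : Fin d, ⟪((u j : G) : H), ((u j' : G) : H)⟫ = if j = j' then 1 else 0 := by
    intro j j'
    have h1 : ⟪((u j : G) : H), ((u j' : G) : H)⟫ = ⟪u j, u j'⟫ := rfl
    rw [h1, orthonormal_iff_ite.mp u.orthonormal]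
  have hcross : ∀ (j : Fin d) (n : ℕ), ⟪((u j : G) : H), E n⟫ = 0 := fun j n =>
    Submodule.inner_right_of_mem_orthogonal (u j).2 (hEmem n)
  have hcross' : ∀ (n : ℕ) (j : Fin d), ⟪E n, ((u j : G) : H)⟫ = 0 := fun n j =>
    Submodule.inner_left_of_mem_orthogonal (u j).2 (hEmem n)
  have honβ : Orthonormal ℂ β := by
    rw [orthonormal_iff_ite]
    rintro (j | n) (j' | n') <;>
      simp [hβ, huinner, hEinner, hcross, hcross', Sum.inl.injEq, Sum.inr.injEq]
  have hsp : (span ℂ (Set.range β))ᗮ = ⊥ := by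
    rw [Submodule.eq_bot_iff]
    intro z hz
    have hzb : ∀ i, ⟪β i, z⟫ = 0 := fun i =>
      (Submodule.mem_orthogonal _ _).1 hz _ (subset_span ⟨i, rfl⟩)
    have hzG : z ∈ Gᗮ := by
      rw [Submodule.mem_orthogonal]
      intro gv hgv
      have hrep := u.sum_repr ⟨gv, hgv⟩
      have hgv2 : gv = ∑ j, u.repr ⟨gv, hgv⟩ j • ((u j : G) : H) := by
        conv_lhs => rw [show gv = ((⟨gv, hgv⟩ : G) : H) from rfl, ← hrep]
        rw [Submodule.coe_sum]
        simp
      rw [hgv2, sum_inner]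
      have hz2 : ∀ j : Fin d, ⟪((u j : G) : H), z⟫ = 0 := fun j => hzb (Sum.inl j)
      simp [inner_smul_left, hz2]
    have hzE : ∀ k : wset, ⟪(b0 k : ↥Gᗮ), (⟨z, hzG⟩ : ↥Gᗮ)⟫ = 0 := by
      intro k
      have h3 := hzb (Sum.inr (q k))
      have h4 : ⟪(b0 (q.symm (q k)) : ↥Gᗮ), (⟨z, hzG⟩ : ↥Gᗮ)⟫ = 0 := h3
      simpa using h4
    have hz0 : (⟨z, hzG⟩ : ↥Gᗮ) = 0 := by
      have h5 : b0.repr ⟨z, hzG⟩ = 0 := by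
        apply lp.ext
        funext k
        rw [b0.repr_apply_apply]
        simpa using hzE k
      simpa using b0.repr.map_eq_zero_iff.mp h5
    simpa using congrArg Subtype.val hz0
  let b : HilbertBasis (Fin d ⊕ ℕ) ℂ H := HilbertBasis.mkOfOrthogonalEqBot honβ hsp
  have hb : ⇑b = β := HilbertBasis.coe_mkOfOrthogonalEqBot honβ hsp
  -- the perturbed shift family
  set Cr : ℂ := (r : ℂ) with hCr
  set Cδ : ℂ := (δ : ℂ) with hCδ
  have hCrδ : (starRingEnd ℂ) Cr * Cr + (starRingEnd ℂ) Cδ * Cδ = 1 := by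
    rw [hCr, hCδ, Complex.conj_ofReal, Complex.conj_ofReal]
    push_cast
    rw [show ((r:ℂ) * r + (δ:ℂ) * δ) = (((r^2 + δ^2 : ℝ)) : ℂ) by push_cast; ring]
    rw [hr2]; push_cast; ring
  set v : Fin d ⊕ ℕ → H :=
    Sum.elim (fun j => Cr • ((V' (u j) : G) : H) + Cδ • E (j : ℕ)) (fun n => E (n + d)) with hv'
  have hV'inner : ∀ j j' : Fin d,
      ⟪((V' (u j) : G) : H), ((V' (u j') : G) : H)⟫ = if j = j' then 1 else 0 := by
    intro j j'
    have h1 : ⟪((V' (u j) : G) : H), ((V' (u j') : G) : H)⟫ = ⟪V' (u j), V' (u j')⟫ := rfl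
    rw [h1, V'.inner_map_map, orthonormal_iff_ite.mp u.orthonormal]
  have hV'cross : ∀ (j : Fin d) (n : ℕ), ⟪((V' (u j) : G) : H), E n⟫ = 0 := fun j n =>
    Submodule.inner_right_of_mem_orthogonal (V' (u j)).2 (hEmem n)
  have hV'cross' : ∀ (n : ℕ) (j : Fin d), ⟪E n, ((V' (u j) : G) : H)⟫ = 0 := fun n j =>
    Submodule.inner_left_of_mem_orthogonal (V' (u j)).2 (hEmem n)
  have honv : Orthonormal ℂ v := by
    rw [orthonormal_iff_ite]
    rintro (j | n) (j' | n')
    · have hval : (((j:ℕ) = (j':ℕ))) = (j = j') := by simp [Fin.val_inj]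
      simp only [hv', Sum.elim_inl, inner_add_left, inner_add_right, inner_smul_left,
        inner_smul_right, hV'inner, hV'cross, hV'cross', hEinner, hval, mul_zero, add_zero,
        zero_add, Sum.inl.injEq]
      by_cases hjj : j = j'
      · simp only [hjj, if_true]
        linear_combination hCrδ
      · simp [hjj]
    · simp only [hv', Sum.elim_inl, Sum.elim_inr, inner_add_left, inner_smul_left,
        hV'cross, hEinner]
      have : ((j : ℕ) = n' + d) = False := by
        simp only [eq_iff_iff, iff_false]
        have := j.isLt
        omega
      simp [this]
    · simp only [hv', Sum.elim_inl, Sum.elim_inr, inner_add_right, inner_smul_right,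
        hV'cross', hEinner]
      have : ((n : ℕ) + d = (j' : ℕ)) = False := by
        simp only [eq_iff_iff, iff_false]
        have := j'.isLt
        omega
      simp [this]
    · simp only [hv', Sum.elim_inr, hEinner]
      have : (n + d = n' + d) = (n = n') := by simp only [eq_iff_iff]; omega
      simp [this, Sum.inr.injEq]
  -- the isometry W
  let Φ : lp (fun _ : Fin d ⊕ ℕ => ℂ) 2 →ₗᵢ[ℂ] H := honv.orthogonalFamily.linearIsometry
  let Wli : H →ₗᵢ[ℂ] H := Φ.comp b.repr.toLinearIsometry
  let W : H →L[ℂ] H := Wli.toContinuousLinearMap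
  have hWapp : ∀ z, W z = Wli z := fun z => rfl
  have hWnorm : ∀ y, ‖W y‖ = ‖y‖ := fun y => Wli.norm_map y
  have hWb : ∀ i, W (β i) = v i := by
    intro i
    show Φ (b.repr (β i)) = v i
    rw [← hb, b.repr_self]
    rw [OrthogonalFamily.linearIsometry_apply_single]
    simp [LinearIsometry.toSpanSingleton_apply]
  have hWG : ∀ g : G, W (g : H) =
      Cr • ((V' g : G) : H) + Cδ • (∑ j : Fin d, u.repr g j • E (j : ℕ)) := by
    intro g
    have hgsum : (g : H) = ∑ j, u.repr g j • ((u j : G) : H) := by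
      conv_lhs => rw [← u.sum_repr g]
      rw [Submodule.coe_sum]
      simp
    have hVg : ((V' g : G) : H) = ∑ j, u.repr g j • ((V' (u j) : G) : H) := by
      conv_lhs => rw [← u.sum_repr g]
      rw [map_sum, Submodule.coe_sum]
      simp
    calc W (g : H) = W (∑ j, u.repr g j • ((u j : G) : H)) := by rw [← hgsum]
      _ = ∑ j, u.repr g j • W ((u j : G) : H) := by rw [map_sum]; simp only [map_smul]
      _ = ∑ j, u.repr g j • (Cr • ((V' (u j) : G) : H) + Cδ • E (j : ℕ)) := by
          refine Finset.sum_congr rfl fun j _ => ?_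
          rw [show W ((u j : G) : H) = W (β (Sum.inl j)) from rfl, hWb]
          rw [hv']
          simp
      _ = Cr • ((V' g : G) : H) + Cδ • (∑ j : Fin d, u.repr g j • E (j : ℕ)) := by
          rw [hVg, Finset.smul_sum, Finset.smul_sum, ← Finset.sum_add_distrib]
          refine Finset.sum_congr rfl fun j _ => ?_
          rw [smul_add, smul_comm (u.repr g j) Cr, smul_comm (u.repr g j) Cδ]
  -- closeness
  have hclose : ∀ i, ‖V (x i) - W (x i)‖ < ε := by
    intro i
    set g : G := ⟨x i, hxG i⟩ with hg
    set Sg : H := ∑ j : Fin d, u.repr g j • E (j : ℕ) with hSgdef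
    have hWx : W (x i) = Cr • V (x i) + Cδ • Sg := by
      have h1 := hWG g
      rwa [hV'F (x i) (hxG i) (hxF i)] at h1
    have honE : Orthonormal ℂ (fun j : Fin d => E (j : ℕ)) := by
      rw [orthonormal_iff_ite]
      intro j j'
      rw [hEinner]
      simp [Fin.val_inj]
    have hSgnorm : ‖Sg‖ = ‖x i‖ := by
      have h1 : ⟪Sg, Sg⟫ = ∑ j, (starRingEnd ℂ) (u.repr g j) * u.repr g j :=
        honE.inner_sum _ _ _
      have h2 : ⟪Sg, Sg⟫ = (((∑ j, ‖u.repr g j‖^2 : ℝ)) : ℂ) := by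
        rw [h1]
        push_cast
        refine Finset.sum_congr rfl fun j _ => ?_
        rw [RCLike.conj_mul]
        norm_cast
      have h3 : ‖Sg‖^2 = ∑ j, ‖u.repr g j‖^2 := by
        have h2' : RCLike.re ⟪Sg, Sg⟫ =
            RCLike.re ((((∑ j, ‖u.repr g j‖^2 : ℝ)) : ℂ)) := by rw [h2]
        rw [@inner_self_eq_norm_sq ℂ] at h2'
        rw [h2']
        norm_cast
      have h4 : ‖u.repr g‖ = ‖x i‖ := by
        rw [u.repr.norm_map g]
        rfl
      have h5 : ‖u.repr g‖^2 = ∑ j, ‖u.repr g j‖^2 := by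
        rw [EuclideanSpace.norm_eq]
        rw [Real.sq_sqrt]
        positivity
      calc ‖Sg‖ = Real.sqrt (‖Sg‖^2) := (Real.sqrt_sq (norm_nonneg _)).symm
        _ = Real.sqrt (‖u.repr g‖^2) := by rw [h3, ← h5]
        _ = ‖u.repr g‖ := Real.sqrt_sq (norm_nonneg _)
        _ = ‖x i‖ := h4
    have hsplit : V (x i) - W (x i) = (1 - Cr) • V (x i) - Cδ • Sg := by
      rw [hWx, sub_smul, one_smul]
      abel
    have hb2 : ‖(1 - Cr) • V (x i)‖ = (1 - r) * ‖x i‖ := by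
      rw [norm_smul, hV]
      congr 1
      rw [hCr, show (1 : ℂ) - (r : ℂ) = (((1 - r : ℝ)) : ℂ) by push_cast; ring,
        Complex.norm_real]
      exact abs_of_nonneg (by linarith)
    have hb3 : ‖Cδ • Sg‖ = δ * ‖x i‖ := by
      rw [norm_smul, hSgnorm, hCδ, Complex.norm_real]
      congr 1
      exact abs_of_nonneg hδ0.le
    have hb4 : ‖V (x i) - W (x i)‖ ≤ (1 - r) * ‖x i‖ + δ * ‖x i‖ := by
      rw [hsplit]
      calc ‖(1 - Cr) • V (x i) - Cδ • Sg‖ ≤ ‖(1 - Cr) • V (x i)‖ + ‖Cδ • Sg‖ :=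
            norm_sub_le _ _
        _ = (1 - r) * ‖x i‖ + δ * ‖x i‖ := by rw [hb2, hb3]
    have hδbound : δ * (2*M + 2) ≤ ε := (le_div_iff₀ (by linarith : (0:ℝ) < 2*M + 2)).1 hδε
    have hxi := hxM i
    have hxin := norm_nonneg (x i)
    nlinarith
  -- no unimodular eigenvalues
  have heig : ∀ c : ℂ, ‖c‖ = 1 → ∀ y : H, y ≠ 0 → W y ≠ c • y := by
    intro c hc y hy heq
    have hdense : Dense ((span ℂ (Set.range β) : Submodule ℂ H) : Set H) := by
      rw [Submodule.dense_iff_topologicalClosure_eq_top]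
      have h0 := b.dense_span
      rwa [hb] at h0
    set PG := orthogonalProjection G with hPGdef
    set Aop : H →L[ℂ] H := (G.subtypeL.comp PG).comp W with hAop
    set Bop : H →L[ℂ] H := Cr • (G.subtypeL.comp (V'.toContinuousLinearMap.comp PG)) with hBop
    have hABop : Aop = Bop := by
      apply ContinuousLinearMap.ext_on hdense
      rintro _ ⟨i, rfl⟩
      rcases i with j | n
      · have h1 : Aop (β (Sum.inl j)) = ((PG (v (Sum.inl j)) : G) : H) := by
          simp only [hAop, ContinuousLinearMap.comp_apply]
          rw [show W (β (Sum.inl j)) = v (Sum.inl j) from hWb (Sum.inl j)]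
          rfl
        rw [h1]
        have h2 : PG (v (Sum.inl j)) = Cr • V' (u j) := by
          rw [hv']
          simp only [Sum.elim_inl, map_add, map_smul]
          rw [orthogonalProjection_mem_subspace_eq_self,
            orthogonalProjection_mem_subspace_orthogonalComplement_eq_zero (hEmem (j : ℕ))]
          simp
        rw [h2]
        have h3 : Bop (β (Sum.inl j)) = Cr • ((V' (PG ((u j : G) : H)) : G) : H) := rfl
        rw [h3, show PG ((u j : G) : H) = u j from orthogonalProjection_mem_subspace_eq_self _]
        simp
      · have h1 : Aop (β (Sum.inr n)) = ((PG (v (Sum.inr n)) : G) : H) := by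
          simp only [hAop, ContinuousLinearMap.comp_apply]
          rw [show W (β (Sum.inr n)) = v (Sum.inr n) from hWb (Sum.inr n)]
          rfl
        rw [h1]
        have h2 : PG (v (Sum.inr n)) = 0 :=
          orthogonalProjection_mem_subspace_orthogonalComplement_eq_zero (hEmem (n + d))
        rw [h2]
        have h3 : Bop (β (Sum.inr n)) = Cr • ((V' (PG (E n)) : G) : H) := rfl
        rw [h3, show PG (E n) = 0 from
          orthogonalProjection_mem_subspace_orthogonalComplement_eq_zero (hEmem n)]
        simp
    -- step 1 : y is orthogonal to G
    have hstep1 : ((PG y : G) : H) = 0 := by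
      have h1 : Aop y = Bop y := by rw [hABop]
      have h2 : Aop y = c • ((PG y : G) : H) := by
        simp only [hAop, ContinuousLinearMap.comp_apply]
        rw [heq]
        simp only [map_smul]
        rfl
      have h3 : Bop y = Cr • ((V' (PG y) : G) : H) := rfl
      have h4 : ‖((PG y : G) : H)‖ = r * ‖((PG y : G) : H)‖ := by
        have h6 : ‖((V' (PG y) : G) : H)‖ = ‖((PG y : G) : H)‖ := V'.norm_map (PG y)
        calc ‖((PG y : G) : H)‖ = ‖c • ((PG y : G) : H)‖ := by rw [norm_smul, hc, one_mul]
          _ = ‖Cr • ((V' (PG y) : G) : H)‖ := by rw [← h2, ← h3, h1]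
          _ = r * ‖((PG y : G) : H)‖ := by
              rw [norm_smul, h6, hCr, Complex.norm_real, Real.norm_eq_abs, abs_of_nonneg hr0]
      by_contra h7
      have h8 : 0 < ‖((PG y : G) : H)‖ := by
        rcases (norm_nonneg ((PG y : G) : H)).lt_or_eq with h | h
        · exact h
        · exact absurd (norm_eq_zero.mp h.symm) h7
      nlinarith
    have hyperp : y ∈ Gᗮ := by
      rw [← orthogonalProjection_eq_zero_iff (K := G)]
      exact_mod_cast hstep1
    -- step 2 : the coefficients along E vanish
    set a : ℕ → ℂ := fun n => ⟪E n, y⟫ with ha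
    have hstep : ∀ n, a n = c * a (n + d) := by
      intro n
      have h4 : W (E n) = E (n + d) := hWb (Sum.inr n)
      have h5 : ⟪E (n + d), W y⟫ = ⟪E n, y⟫ := by
        rw [← h4, hWapp, hWapp]
        exact Wli.inner_map_map (E n) y
      rw [heq, inner_smul_right] at h5
      exact h5.symm
    have hnorm_eq : ∀ k n, ‖a n‖ = ‖a (n + k * d)‖ := by
      intro k
      induction k with
      | zero => intro n; simp
      | succ k ih =>
        intro n
        calc ‖a n‖ = ‖a (n + k * d)‖ := ih n
          _ = ‖c * a (n + k * d + d)‖ := by rw [← hstep]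
          _ = ‖a (n + (k + 1) * d)‖ := by
              rw [norm_mul, hc, one_mul]
              congr 1
              ring
    have hcoef : ∀ n, b.repr y (Sum.inr n) = a n := by
      intro n
      rw [b.repr_apply_apply, hb]
      rfl
    have hsumm : Summable (fun n : ℕ => ‖b.repr y (Sum.inr n)‖ ^ 2) := by
      have hmem := lp.memℓp (b.repr y)
      rw [memℓp_gen_iff (by norm_num : 0 < (2 : ℝ≥0∞).toReal)] at hmem
      have hmem2 : Summable (fun i : Fin d ⊕ ℕ => ‖b.repr y i‖ ^ 2) := by
        have hconv : (fun i : Fin d ⊕ ℕ => ‖b.repr y i‖ ^ (2 : ℝ≥0∞).toReal) =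
            fun i => ‖b.repr y i‖ ^ 2 := by
          funext i
          rw [show (2 : ℝ≥0∞).toReal = ((2 : ℕ) : ℝ) by norm_num, Real.rpow_natCast]
        rwa [hconv] at hmem
      exact hmem2.comp_injective Sum.inr_injective
    have htend : Filter.Tendsto (fun n : ℕ => ‖a n‖ ^ 2) Filter.atTop (nhds 0) := by
      have h1 := hsumm.tendsto_atTop_zero
      simpa only [hcoef] using h1
    have ha0 : ∀ n, a n = 0 := by
      intro n
      have h7 : Filter.Tendsto (fun k : ℕ => ‖a (n + k * d)‖ ^ 2) Filter.atTop (nhds 0) := by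
        apply htend.comp
        apply Filter.tendsto_atTop_mono (f := id)
        · intro k
          calc (k : ℕ) = k * 1 := (mul_one k).symm
            _ ≤ k * d := Nat.mul_le_mul_left k hdpos
            _ ≤ n + k * d := Nat.le_add_left _ _
        · exact Filter.tendsto_id
      have h8 : (fun k : ℕ => ‖a (n + k * d)‖ ^ 2) = fun _ => ‖a n‖ ^ 2 := by
        funext k
        rw [← hnorm_eq k n]
      rw [h8] at h7
      have h9 : ‖a n‖ ^ 2 = 0 := tendsto_nhds_unique tendsto_const_nhds h7
      have h10 : ‖a n‖ = 0 := by
        nlinarith [norm_nonneg (a n)]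
      exact norm_eq_zero.mp h10
    -- conclude y = 0
    have hrepr0 : b.repr y = 0 := by
      apply lp.ext
      funext i
      rcases i with j | n
      · rw [b.repr_apply_apply, hb]
        have : ⟪β (Sum.inl j), y⟫ = 0 :=
          Submodule.inner_right_of_mem_orthogonal (u j).2 hyperp
        simpa using this
      · rw [hcoef]
        simpa using ha0 n
    exact hy (by simpa using b.repr.map_eq_zero_iff.mp hrepr0)
  exact ⟨W, hWnorm, heig, hclose⟩
end
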